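/- arXiv:2407.15898 — 8 statements merged into one kernel-verified Lean document; each statement's English description precedes it below -/
import Mathlib

section
/- Let n ≥ 6. Then λ1(Γ_{n,0}) > n−4, and λ1(Γ_{n,0}) equals the largest real root of the equation λ³ − (n−6)λ² − 3(n−4)λ − (n−3) = 0. -/
structure SignedGraph (V : Type*) where
  G : SimpleGraph V
  sign : V → V → ℤ
  sign_symm : ∀ u v, sign u v = sign v u
  sign_mem : ∀ u v, G.Adj u v → sign u v = 1 ∨ sign u v = -1
  sign_not : ∀ u v, ¬ G.Adj u v → sign u v = 0

namespace SignedGraph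

variable {V : Type*}

/-- The adjacency matrix of a signed graph, over `ℝ`. -/
noncomputable def adjMatrix (Γ : SignedGraph V) : Matrix V V ℝ :=
  fun u v => (Γ.sign u v : ℝ)

/-- The largest eigenvalue `λ₁` of a signed graph. -/
noncomputable def lambda1 (Γ : SignedGraph V) [Fintype V] : ℝ :=
  letI := Classical.decEq V
  sSup (spectrum ℝ Γ.adjMatrix)

/-- The smallest eigenvalue `λₙ` of a signed graph. -/
noncomputable def lambdaMin (Γ : SignedGraph V) [Fintype V] : ℝ :=
  letI := Classical.decEq V
  sInf (spectrum ℝ Γ.adjMatrix)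

/-- The spectral radius `ρ = max {λ₁, -λₙ}` of a signed graph. -/
noncomputable def rho (Γ : SignedGraph V) [Fintype V] : ℝ :=
  max Γ.lambda1 (-Γ.lambdaMin)

/-- The sign (product of edge signs) of a walk. -/
def walkSign (Γ : SignedGraph V) {G' : SimpleGraph V} : ∀ {u v : V}, G'.Walk u v → ℤ
  | _, _, .nil => 1
  | _, _, .cons (u := a) (v := b) _ p => Γ.sign a b * walkSign Γ p

/-- A signed graph is balanced if every cycle is positive. -/
def Balanced (Γ : SignedGraph V) : Prop :=
  ∀ (u : V) (w : Γ.G.Walk u u), w.IsCycle → Γ.walkSign w = 1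

def Unbalanced (Γ : SignedGraph V) : Prop := ¬ Γ.Balanced

/-- `Γ` has a negative cycle of length `k`. -/
def HasNegCycleOfLength (Γ : SignedGraph V) (k : ℕ) : Prop :=
  ∃ (u : V) (w : Γ.G.Walk u u), w.IsCycle ∧ Γ.walkSign w = -1 ∧ w.length = k

/-- Switching equivalence: same underlying graph and signs related by a switching function. -/
def SwitchingEquivalent (Γ Γ' : SignedGraph V) : Prop :=
  Γ.G = Γ'.G ∧ ∃ s : V → ℤ, (∀ v, s v = 1 ∨ s v = -1) ∧
    ∀ u v, Γ'.sign u v = s u * Γ.sign u v * s v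

/-- Switching isomorphism. -/
def SwitchingIsomorphic {V' : Type*} (Γ : SignedGraph V) (Γ' : SignedGraph V') : Prop :=
  ∃ (e : V ≃ V') (s : V → ℤ), (∀ v, s v = 1 ∨ s v = -1) ∧
    (∀ u v, Γ'.G.Adj (e u) (e v) ↔ Γ.G.Adj u v) ∧
    (∀ u v, Γ'.sign (e u) (e v) = s u * Γ.sign u v * s v)

/-- Build a signed graph from a symmetric sign function with values in `{0, 1, -1}`. -/
def ofSign (s : V → V → ℤ) (hsymm : ∀ u v, s u v = s v u)
    (hloop : ∀ v, s v v = 0)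
    (hval : ∀ u v, s u v = 0 ∨ s u v = 1 ∨ s u v = -1) : SignedGraph V where
  G := { Adj := fun u v => s u v ≠ 0
         symm := ⟨fun u v h => by
           show s v u ≠ 0
           rw [hsymm v u]; exact h⟩
         loopless := ⟨fun v h => h (hloop v)⟩ }
  sign := s
  sign_symm := hsymm
  sign_mem := fun u v h => (hval u v).resolve_left h
  sign_not := fun u v h => not_not.mp h

/-- Build a signed graph on `Fin n` from a sign function on ordered pairs of naturals. -/
def ofMinMaxAux (n : ℕ) (aux : ℕ → ℕ → ℤ) (h0 : ∀ a, aux a a = 0)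
    (hval : ∀ a b, aux a b = 0 ∨ aux a b = 1 ∨ aux a b = -1) : SignedGraph (Fin n) :=
  ofSign (fun i j => aux (min i.val j.val) (max i.val j.val))
    (fun i j => by
      show aux (min i.val j.val) (max i.val j.val) = aux (min j.val i.val) (max j.val i.val)
      rw [min_comm, max_comm])
    (fun i => by
      show aux (min i.val i.val) (max i.val i.val) = 0
      rw [min_self, max_self, h0])
    (fun i j => hval _ _)

def gammaNAux : ℕ → ℕ → ℤ := fun a b =>
  if a = b then 0
  else if a = 0 ∧ b = 1 then -1
  else if a = 0 ∧ b = 2 then 1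
  else if a = 1 ∧ b = 3 then 1
  else if 2 ≤ a ∧ a < b ∧ ¬(a = 2 ∧ b = 3) then 1
  else 0

/-- The signed graph `Γₙ`: a copy of `K_{n-2}` (on `{2, …, n-1}`) with the edge `{2,3}`
removed, together with two new vertices `0, 1` and edges `{0,1}` (negative),
`{0,2}` and `{1,3}` (positive); all other edges positive. -/
def GammaN (n : ℕ) : SignedGraph (Fin n) :=
  ofMinMaxAux n gammaNAux (fun a => by simp [gammaNAux])
    (fun a b => by unfold gammaNAux; split_ifs <;> simp)

def gammaNTauAux (τ : ℕ) : ℕ → ℕ → ℤ := fun a b =>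
  if a = b then 0
  else if a = 0 ∧ b = 1 then -1
  else if a = 0 ∧ b = 3 then 1
  else if a = 0 ∧ 4 ≤ b ∧ b ≤ τ + 3 then 1
  else if a = 1 ∧ b = 2 then 1
  else if a = 2 ∧ τ + 4 ≤ b then 1
  else if a = 3 ∧ 4 ≤ b then 1
  else if 4 ≤ a ∧ a < b then 1
  else 0

/-- The signed graph `Γ_{n,τ}`: here `v₁ = 0`, `v₂ = 1`, `v₃ = 2`, `v₅ = 3`,
`X = {4, …, τ+3}`, `Y = {τ+4, …, n-1}` (with `v₄ = τ+4 ∈ Y`); the edge `{0,1}` is the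
unique negative edge. -/
def GammaNTau (n τ : ℕ) : SignedGraph (Fin n) :=
  ofMinMaxAux n (gammaNTauAux τ) (fun a => by simp [gammaNTauAux])
    (fun a b => by unfold gammaNTauAux; split_ifs <;> simp)

/-- The negation `-Γ` of a signed graph. -/
def neg (Γ : SignedGraph V) : SignedGraph V where
  G := Γ.G
  sign := fun u v => - Γ.sign u v
  sign_symm := fun u v => by
    show -Γ.sign u v = -Γ.sign v u
    rw [Γ.sign_symm]
  sign_mem := fun u v h => by
    show -Γ.sign u v = 1 ∨ -Γ.sign u v = -1
    rcases Γ.sign_mem u v h with h' | h' <;> simp [h']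
  sign_not := fun u v h => by
    show -Γ.sign u v = 0
    simp [Γ.sign_not u v h]

/-- The induced signed subgraph on a set of vertices. -/
def induce (Γ : SignedGraph V) (S : Set V) : SignedGraph S where
  G := { Adj := fun u v => Γ.G.Adj u v
         symm := ⟨fun u v h => Γ.G.adj_symm h⟩
         loopless := ⟨fun u h => Γ.G.irrefl h⟩ }
  sign := fun u v => Γ.sign u v
  sign_symm := fun u v => Γ.sign_symm u v
  sign_mem := fun u v h => Γ.sign_mem u v h
  sign_not := fun u v h => Γ.sign_not u v h

/-- `S` is a balanced clique of `Γ`: it induces a complete subgraph which is balanced. -/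
def IsBalancedClique [DecidableEq V] (Γ : SignedGraph V) (S : Finset V) : Prop :=
  (∀ u ∈ S, ∀ v ∈ S, u ≠ v → Γ.G.Adj u v) ∧ (Γ.induce (S : Set V)).Balanced

end SignedGraph

open SignedGraph Finset

namespace Gamma0

lemma aux_0b (b : ℕ) (hb : 4 ≤ b) : gammaNTauAux 0 0 b = 0 := by
  unfold gammaNTauAux; split_ifs <;> first | rfl | omega | (exfalso; tauto)

lemma aux_1b (b : ℕ) (hb : 4 ≤ b) : gammaNTauAux 0 1 b = 0 := by
  unfold gammaNTauAux; split_ifs <;> first | rfl | omega | (exfalso; tauto)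

lemma aux_2b (b : ℕ) (hb : 4 ≤ b) : gammaNTauAux 0 2 b = 1 := by
  unfold gammaNTauAux; split_ifs <;> first | rfl | omega | (exfalso; tauto)

lemma aux_3b (b : ℕ) (hb : 4 ≤ b) : gammaNTauAux 0 3 b = 1 := by
  unfold gammaNTauAux; split_ifs <;> first | rfl | omega | (exfalso; tauto)

lemma aux_ab (a b : ℕ) (ha : 4 ≤ a) (hab : a < b) : gammaNTauAux 0 a b = 1 := by
  unfold gammaNTauAux; split_ifs <;> first | rfl | omega | (exfalso; tauto)

section Rows

variable {n : ℕ}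

lemma sign_eq (i j : Fin n) :
    (GammaNTau n 0).adjMatrix i j
      = ((gammaNTauAux 0 (min i.val j.val) (max i.val j.val) : ℤ) : ℝ) := rfl

/-- sum over "Y ∪ {v3,v5}" part -/
noncomputable def Sv (v : Fin n → ℝ) : ℝ := ∑ j ∈ univ.filter (fun j : Fin n => 4 ≤ j.val), v j

lemma card_filter (hn : 6 ≤ n) : (univ.filter (fun j : Fin n => 4 ≤ j.val)).card = n - 4 := by
  have h4 : 4 < n := by omega
  have : univ.filter (fun j : Fin n => 4 ≤ j.val) = Finset.Ici (⟨4, h4⟩ : Fin n) := by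
    ext j; simp [Fin.le_def]
  rw [this, Fin.card_Ici]

lemma row0 (hn : 6 ≤ n) (v : Fin n → ℝ) :
    ∑ j, (GammaNTau n 0).adjMatrix ⟨0, by omega⟩ j * v j
      = -v ⟨1, by omega⟩ + v ⟨3, by omega⟩ := by
  have key : ∀ j : Fin n, (GammaNTau n 0).adjMatrix ⟨0, by omega⟩ j * v j
      = -(if j = (⟨1, by omega⟩ : Fin n) then v j else 0)
        + (if j = (⟨3, by omega⟩ : Fin n) then v j else 0) := by
    intro j
    have hA : (GammaNTau n 0).adjMatrix ⟨0, by omega⟩ j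
        = ((gammaNTauAux 0 (min 0 j.val) (max 0 j.val) : ℤ) : ℝ) := rfl
    rcases le_or_gt 4 j.val with h4 | h4
    · have hmin : min 0 j.val = 0 := by omega
      have hmax : max 0 j.val = j.val := by omega
      rw [hA, hmin, hmax, aux_0b _ h4]
      have h1 : j ≠ (⟨1, by omega⟩ : Fin n) := by simp [Fin.ext_iff]; omega
      have h3 : j ≠ (⟨3, by omega⟩ : Fin n) := by simp [Fin.ext_iff]; omega
      simp [h1, h3]
    · have : j.val = 0 ∨ j.val = 1 ∨ j.val = 2 ∨ j.val = 3 := by omega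
      rcases this with hj | hj | hj | hj <;>
        · rw [hA, hj]
          norm_num [gammaNTauAux, Fin.ext_iff, hj]
  rw [Finset.sum_congr rfl (fun j _ => key j), Finset.sum_add_distrib]
  simp [Finset.sum_ite_eq']

lemma row1 (hn : 6 ≤ n) (v : Fin n → ℝ) :
    ∑ j, (GammaNTau n 0).adjMatrix ⟨1, by omega⟩ j * v j
      = -v ⟨0, by omega⟩ + v ⟨2, by omega⟩ := by
  have key : ∀ j : Fin n, (GammaNTau n 0).adjMatrix ⟨1, by omega⟩ j * v j
      = -(if j = (⟨0, by omega⟩ : Fin n) then v j else 0)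
        + (if j = (⟨2, by omega⟩ : Fin n) then v j else 0) := by
    intro j
    have hA : (GammaNTau n 0).adjMatrix ⟨1, by omega⟩ j
        = ((gammaNTauAux 0 (min 1 j.val) (max 1 j.val) : ℤ) : ℝ) := rfl
    rcases le_or_gt 4 j.val with h4 | h4
    · have hmin : min 1 j.val = 1 := by omega
      have hmax : max 1 j.val = j.val := by omega
      rw [hA, hmin, hmax, aux_1b _ h4]
      have h1 : j ≠ (⟨0, by omega⟩ : Fin n) := by simp [Fin.ext_iff]; omega
      have h3 : j ≠ (⟨2, by omega⟩ : Fin n) := by simp [Fin.ext_iff]; omega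
      simp [h1, h3]
    · have : j.val = 0 ∨ j.val = 1 ∨ j.val = 2 ∨ j.val = 3 := by omega
      rcases this with hj | hj | hj | hj <;>
        · rw [hA, hj]
          norm_num [gammaNTauAux, Fin.ext_iff, hj]
  rw [Finset.sum_congr rfl (fun j _ => key j), Finset.sum_add_distrib]
  simp [Finset.sum_ite_eq']

lemma row2 (hn : 6 ≤ n) (v : Fin n → ℝ) :
    ∑ j, (GammaNTau n 0).adjMatrix ⟨2, by omega⟩ j * v j
      = v ⟨1, by omega⟩ + Sv v := by
  have key : ∀ j : Fin n, (GammaNTau n 0).adjMatrix ⟨2, by omega⟩ j * v j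
      = (if j = (⟨1, by omega⟩ : Fin n) then v j else 0)
        + (if 4 ≤ j.val then v j else 0) := by
    intro j
    have hA : (GammaNTau n 0).adjMatrix ⟨2, by omega⟩ j
        = ((gammaNTauAux 0 (min 2 j.val) (max 2 j.val) : ℤ) : ℝ) := rfl
    rcases le_or_gt 4 j.val with h4 | h4
    · have hmin : min 2 j.val = 2 := by omega
      have hmax : max 2 j.val = j.val := by omega
      rw [hA, hmin, hmax, aux_2b _ h4]
      have h1 : j ≠ (⟨1, by omega⟩ : Fin n) := by simp [Fin.ext_iff]; omega
      simp [h1, h4]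
    · have : j.val = 0 ∨ j.val = 1 ∨ j.val = 2 ∨ j.val = 3 := by omega
      rcases this with hj | hj | hj | hj <;>
        · rw [hA, hj]
          norm_num [gammaNTauAux, Fin.ext_iff, hj]
  rw [Finset.sum_congr rfl (fun j _ => key j), Finset.sum_add_distrib]
  rw [Finset.sum_ite_eq' Finset.univ]
  simp [Sv, Finset.sum_filter]

lemma row3 (hn : 6 ≤ n) (v : Fin n → ℝ) :
    ∑ j, (GammaNTau n 0).adjMatrix ⟨3, by omega⟩ j * v j
      = v ⟨0, by omega⟩ + Sv v := by
  have key : ∀ j : Fin n, (GammaNTau n 0).adjMatrix ⟨3, by omega⟩ j * v j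
      = (if j = (⟨0, by omega⟩ : Fin n) then v j else 0)
        + (if 4 ≤ j.val then v j else 0) := by
    intro j
    have hA : (GammaNTau n 0).adjMatrix ⟨3, by omega⟩ j
        = ((gammaNTauAux 0 (min 3 j.val) (max 3 j.val) : ℤ) : ℝ) := rfl
    rcases le_or_gt 4 j.val with h4 | h4
    · have hmin : min 3 j.val = 3 := by omega
      have hmax : max 3 j.val = j.val := by omega
      rw [hA, hmin, hmax, aux_3b _ h4]
      have h1 : j ≠ (⟨0, by omega⟩ : Fin n) := by simp [Fin.ext_iff]; omega
      simp [h1, h4]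
    · have : j.val = 0 ∨ j.val = 1 ∨ j.val = 2 ∨ j.val = 3 := by omega
      rcases this with hj | hj | hj | hj <;>
        · rw [hA, hj]
          norm_num [gammaNTauAux, Fin.ext_iff, hj]
  rw [Finset.sum_congr rfl (fun j _ => key j), Finset.sum_add_distrib]
  rw [Finset.sum_ite_eq' Finset.univ]
  simp [Sv, Finset.sum_filter]

lemma rowT (hn : 6 ≤ n) (v : Fin n → ℝ) (i : Fin n) (hi : 4 ≤ i.val) :
    ∑ j, (GammaNTau n 0).adjMatrix i j * v j
      = v ⟨2, by omega⟩ + v ⟨3, by omega⟩ + Sv v - v i := by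
  have key : ∀ j : Fin n, (GammaNTau n 0).adjMatrix i j * v j
      = (if j = (⟨2, by omega⟩ : Fin n) then v j else 0)
        + (if j = (⟨3, by omega⟩ : Fin n) then v j else 0)
        + (if 4 ≤ j.val then v j else 0)
        - (if j = i then v j else 0) := by
    intro j
    have hA : (GammaNTau n 0).adjMatrix i j
        = ((gammaNTauAux 0 (min i.val j.val) (max i.val j.val) : ℤ) : ℝ) := rfl
    rcases le_or_gt 4 j.val with h4 | h4
    · rcases eq_or_ne j i with hji | hji
      · subst hji
        rw [hA, min_self, max_self]
        have e2 : j ≠ (⟨2, by omega⟩ : Fin n) := by simp [Fin.ext_iff]; omega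
        have e3 : j ≠ (⟨3, by omega⟩ : Fin n) := by simp [Fin.ext_iff]; omega
        simp [gammaNTauAux, e2, e3, h4]
      · have h2 : j ≠ (⟨2, by omega⟩ : Fin n) := by simp [Fin.ext_iff]; omega
        have h3 : j ≠ (⟨3, by omega⟩ : Fin n) := by simp [Fin.ext_iff]; omega
        have hne : i.val ≠ j.val := fun h => hji (Fin.ext h.symm)
        have : gammaNTauAux 0 (min i.val j.val) (max i.val j.val) = 1 := by
          rcases lt_or_gt_of_ne hne with h | h
          · have hmin : min i.val j.val = i.val := by omega
            have hmax : max i.val j.val = j.val := by omega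
            rw [hmin, hmax]; exact aux_ab _ _ hi h
          · have hmin : min i.val j.val = j.val := by omega
            have hmax : max i.val j.val = i.val := by omega
            rw [hmin, hmax]; exact aux_ab _ _ h4 h
        rw [hA, this]
        simp [h2, h3, hji, h4]
    · have hji : j ≠ i := by intro h; rw [h] at h4; omega
      have : j.val = 0 ∨ j.val = 1 ∨ j.val = 2 ∨ j.val = 3 := by omega
      rcases this with hj | hj | hj | hj
      · have hmin : min i.val j.val = 0 := by omega
        have hmax : max i.val j.val = i.val := by omega
        rw [hA, hmin, hmax, aux_0b _ hi]
        simp [Fin.ext_iff, hj, hji]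
      · have hmin : min i.val j.val = 1 := by omega
        have hmax : max i.val j.val = i.val := by omega
        rw [hA, hmin, hmax, aux_1b _ hi]
        simp [Fin.ext_iff, hj, hji]
      · have hmin : min i.val j.val = 2 := by omega
        have hmax : max i.val j.val = i.val := by omega
        rw [hA, hmin, hmax, aux_2b _ hi]
        simp [Fin.ext_iff, hj, hji]
      · have hmin : min i.val j.val = 3 := by omega
        have hmax : max i.val j.val = i.val := by omega
        rw [hA, hmin, hmax, aux_3b _ hi]
        simp [Fin.ext_iff, hj, hji]
  rw [Finset.sum_congr rfl (fun j _ => key j)]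
  rw [Finset.sum_sub_distrib, Finset.sum_add_distrib, Finset.sum_add_distrib]
  rw [Finset.sum_ite_eq' Finset.univ, Finset.sum_ite_eq' Finset.univ,
    Finset.sum_ite_eq' Finset.univ]
  simp [Sv, Finset.sum_filter]

end Rows

lemma mem_spec_iff {m : ℕ} [DecidableEq (Fin m)] (A : Matrix (Fin m) (Fin m) ℝ) (x : ℝ) :
    x ∈ spectrum ℝ A ↔ ∃ v : Fin m → ℝ, v ≠ 0 ∧ A.mulVec v = x • v := by
  rw [spectrum.mem_iff, Matrix.isUnit_iff_isUnit_det, isUnit_iff_ne_zero, not_not,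
    ← Matrix.exists_mulVec_eq_zero_iff]
  constructor
  · rintro ⟨v, hv, h⟩
    refine ⟨v, hv, ?_⟩
    rwa [Matrix.sub_mulVec, sub_eq_zero, Algebra.algebraMap_eq_smul_one,
      Matrix.smul_mulVec, Matrix.one_mulVec, eq_comm] at h
  · rintro ⟨v, hv, h⟩
    exact ⟨v, hv, by rw [Matrix.sub_mulVec, Algebra.algebraMap_eq_smul_one,
      Matrix.smul_mulVec, Matrix.one_mulVec, h, sub_self]⟩


end Gamma0

open Finset Gamma0

open SignedGraph in
/-- For `n ≥ 6`, `λ₁(Γ_{n,0}) > n−4`, and `λ₁(Γ_{n,0})` equals the largest real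
root of `λ³ − (n−6)λ² − 3(n−4)λ − (n−3) = 0`. -/
theorem lambda1_GammaNTau_zero (n : ℕ) (hn : 6 ≤ n) (γ : ℝ)
    (hroot : γ ^ 3 - ((n : ℝ) - 6) * γ ^ 2 - 3 * ((n : ℝ) - 4) * γ - ((n : ℝ) - 3) = 0)
    (hmax : ∀ x : ℝ,
      x ^ 3 - ((n : ℝ) - 6) * x ^ 2 - 3 * ((n : ℝ) - 4) * x - ((n : ℝ) - 3) = 0 → x ≤ γ) :
    (n : ℝ) - 4 < (GammaNTau n 0).lambda1 ∧ (GammaNTau n 0).lambda1 = γ := by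
  have h6R : (6 : ℝ) ≤ (n : ℝ) := by exact_mod_cast hn
  have hmR : ((n - 4 : ℕ) : ℝ) = (n : ℝ) - 4 := by
    have h4 : (4:ℕ) ≤ n := by omega
    push_cast [h4]; ring
  have hm0 : ((n : ℝ) - 4) ≠ 0 := by linarith
  -- γ > n - 4
  have hP4 : ((n:ℝ)-4)^3 - ((n:ℝ)-6)*((n:ℝ)-4)^2 - 3*((n:ℝ)-4)*((n:ℝ)-4) - ((n:ℝ)-3) < 0 := by
    nlinarith [sq_nonneg ((n:ℝ)-4)]
  have hγgt : (n:ℝ) - 4 < γ := by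
    set f : ℝ → ℝ := fun x => x^3 - ((n:ℝ)-6)*x^2 - 3*((n:ℝ)-4)*x - ((n:ℝ)-3) with hf
    have hcont : ContinuousOn f (Set.Icc ((n:ℝ)-4) (n:ℝ)) := by
      apply Continuous.continuousOn; fun_prop
    have hle : (n:ℝ) - 4 ≤ (n:ℝ) := by linarith
    have hPn : 0 ≤ f (n:ℝ) := by simp only [hf]; nlinarith
    have h0mem : (0:ℝ) ∈ Set.Icc (f ((n:ℝ)-4)) (f (n:ℝ)) := ⟨le_of_lt hP4, hPn⟩
    obtain ⟨r, hr, hfr⟩ := intermediate_value_Icc hle hcont h0mem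
    have hrγ : r ≤ γ := hmax r (by simpa [hf] using hfr)
    have hrne : r ≠ (n:ℝ) - 4 := by
      intro h; rw [h] at hfr
      simp only [hf] at hfr
      linarith
    have := hr.1
    rcases lt_or_eq_of_le hr.1 with h | h
    · linarith
    · exact absurd h.symm hrne
  have hx2 : (2:ℝ) < γ := by linarith
  -- upper bound for spectrum
  have hub : ∀ x : ℝ, (∃ v : Fin n → ℝ, v ≠ 0 ∧
      (GammaNTau n 0).adjMatrix.mulVec v = x • v) → x ≤ γ := by
    rintro x ⟨v, hv, heq⟩
    by_contra hxγ
    push_neg at hxγ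
    have hxn : (n:ℝ) - 4 < x := by linarith
    have hx2' : (2:ℝ) < x := by linarith
    have hPx : x^3 - ((n:ℝ)-6)*x^2 - 3*((n:ℝ)-4)*x - ((n:ℝ)-3) ≠ 0 := by
      intro h
      have := hmax x (by linarith [h] <;> linear_combination h)
      linarith
    have happ : ∀ i, ∑ j, (GammaNTau n 0).adjMatrix i j * v j = x * v i := by
      intro i
      have := congrFun heq i
      simpa [Matrix.mulVec, dotProduct] using this
    have e0 := happ ⟨0, by omega⟩
    rw [row0 hn v] at e0
    have e1 := happ ⟨1, by omega⟩
    rw [row1 hn v] at e1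
    have e2 := happ ⟨2, by omega⟩
    rw [row2 hn v] at e2
    have e3 := happ ⟨3, by omega⟩
    rw [row3 hn v] at e3
    have hT : ∀ i : Fin n, 4 ≤ i.val → (x + 1) * v i
        = v ⟨2, by omega⟩ + v ⟨3, by omega⟩ + Sv v := by
      intro i hi
      have e := happ i
      rw [rowT hn v i hi] at e
      linarith
    set a := v ⟨0, by omega⟩ with ha
    set b := v ⟨1, by omega⟩ with hb
    set c := v ⟨2, by omega⟩ with hc
    set d := v ⟨3, by omega⟩ with hd
    set S := Sv v with hSdef
    have hx1 : x + 1 ≠ 0 := by linarith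
    set y : ℝ := (c + d + S) / (x + 1) with hydef
    have hy : (x + 1) * y = c + d + S := by
      rw [hydef]; field_simp
    have hvy : ∀ i ∈ univ.filter (fun j : Fin n => 4 ≤ j.val), v i = y := by
      intro i hi
      rw [mem_filter] at hi
      have h := hT i hi.2
      rw [hydef]
      field_simp
      linarith
    have hSm : S = ((n:ℝ) - 4) * y := by
      rw [hSdef, Sv, Finset.sum_congr rfl hvy, Finset.sum_const, card_filter hn,
        nsmul_eq_mul, hmR]
    -- antisymmetric part
    have hp : x * (a - b) = (a - b) - (c - d) := by linarith
    have hq : x * (c - d) = -(a - b) := by linarith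
    have hab : a = b := by
      have h : (x^2 - x - 1) * (a - b) = 0 := by linear_combination x * hp - hq
      have h2 : x^2 - x - 1 ≠ 0 := by nlinarith
      have := mul_eq_zero.mp h
      rcases this with h' | h'
      · exact absurd h' h2
      · linarith
    have hcd : c = d := by
      have hx0 : x ≠ 0 := by linarith
      have : x * (c - d) = 0 := by rw [hq, hab]; ring
      rcases mul_eq_zero.mp this with h' | h'
      · exact absurd h' hx0
      · linarith
    -- symmetric part
    have r1 : x * a = -a + c := by
      rw [hab, hcd]; linarith
    have r2 : x * c = a + ((n:ℝ)-4) * y := by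
      rw [← hSm]; linarith [e2, hab]
    have r3 : (x + 1) * y = 2 * c + ((n:ℝ)-4) * y := by
      rw [hy, ← hcd, hSm]; ring
    have hPa : (x^3 - ((n:ℝ)-6)*x^2 - 3*((n:ℝ)-4)*x - ((n:ℝ)-3)) * a = 0 := by
      linear_combination (x*(x+1-((n:ℝ)-4)) - 2*((n:ℝ)-4)) * r1
        + (x+1-((n:ℝ)-4)) * r2 + ((n:ℝ)-4) * r3
    have ha0 : a = 0 := by
      rcases mul_eq_zero.mp hPa with h' | h'
      · exact absurd h' hPx
      · exact h'
    have hc0 : c = 0 := by rw [ha0] at r1; linarith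
    have hy0 : y = 0 := by
      rw [ha0, hc0] at r2
      have : ((n:ℝ)-4) * y = 0 := by linarith
      rcases mul_eq_zero.mp this with h' | h'
      · exact absurd h' hm0
      · exact h'
    have hS0 : S = 0 := by rw [hSm, hy0]; ring
    apply hv
    funext i
    show v i = 0
    rcases le_or_gt 4 i.val with h4 | h4
    · have h := hT i h4
      have h0 : (x+1) * v i = 0 := by linarith [h, hc0, hcd, hS0]
      rcases mul_eq_zero.mp h0 with h' | h'
      · exact absurd h' hx1
      · exact h'
    · have : i.val = 0 ∨ i.val = 1 ∨ i.val = 2 ∨ i.val = 3 := by omega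
      rcases this with hj | hj | hj | hj
      · have : i = (⟨0, by omega⟩ : Fin n) := Fin.ext hj
        rw [this, ← ha, ha0]
      · have : i = (⟨1, by omega⟩ : Fin n) := Fin.ext hj
        rw [this, ← hb, ← hab, ha0]
      · have : i = (⟨2, by omega⟩ : Fin n) := Fin.ext hj
        rw [this, ← hc, hc0]
      · have : i = (⟨3, by omega⟩ : Fin n) := Fin.ext hj
        rw [this, ← hd, ← hcd, hc0]
  -- membership: explicit eigenvector
  have hmem : ∃ v : Fin n → ℝ, v ≠ 0 ∧
      (GammaNTau n 0).adjMatrix.mulVec v = γ • v := by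
    set y0 : ℝ := (γ*(γ+1) - 1) / ((n:ℝ)-4) with hy0def
    set vγ : Fin n → ℝ := fun i =>
      if i.val = 0 ∨ i.val = 1 then 1 else if i.val ≤ 3 then γ + 1 else y0 with hvγ
    have hv0 : vγ ⟨0, by omega⟩ = 1 := by simp [hvγ]
    have hv1 : vγ ⟨1, by omega⟩ = 1 := by simp [hvγ]
    have hv2 : vγ ⟨2, by omega⟩ = γ + 1 := by simp [hvγ]
    have hv3 : vγ ⟨3, by omega⟩ = γ + 1 := by simp [hvγ]
    have hvT : ∀ i : Fin n, 4 ≤ i.val → vγ i = y0 := by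
      intro i hi
      simp only [hvγ]
      rw [if_neg (by omega), if_neg (by omega)]
    have hy0m : ((n:ℝ)-4) * y0 = γ*(γ+1) - 1 := by
      rw [hy0def]; field_simp
    have hSγ : Sv vγ = γ*(γ+1) - 1 := by
      rw [Sv, Finset.sum_congr rfl (fun i hi => hvT i (mem_filter.mp hi).2),
        Finset.sum_const, card_filter hn, nsmul_eq_mul, hmR, hy0m]
    refine ⟨vγ, fun h => by simpa [hv0] using congrFun h ⟨0, by omega⟩, ?_⟩
    funext i
    show ((GammaNTau n 0).adjMatrix.mulVec vγ) i = γ * vγ i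
    have : ((GammaNTau n 0).adjMatrix.mulVec vγ) i
        = ∑ j, (GammaNTau n 0).adjMatrix i j * vγ j := by
      simp [Matrix.mulVec, dotProduct]
    rw [this]
    rcases le_or_gt 4 i.val with h4 | h4
    · rw [rowT hn vγ i h4, hv2, hv3, hSγ, hvT i h4]
      apply mul_left_cancel₀ hm0
      linear_combination (-(1+γ)) * hy0m - hroot
    · have : i.val = 0 ∨ i.val = 1 ∨ i.val = 2 ∨ i.val = 3 := by omega
      rcases this with hj | hj | hj | hj
      · have hi : i = (⟨0, by omega⟩ : Fin n) := Fin.ext hj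
        rw [hi, row0 hn vγ, hv0, hv1, hv3]; ring
      · have hi : i = (⟨1, by omega⟩ : Fin n) := Fin.ext hj
        rw [hi, row1 hn vγ, hv0, hv1, hv2]; ring
      · have hi : i = (⟨2, by omega⟩ : Fin n) := Fin.ext hj
        rw [hi, row2 hn vγ, hv1, hv2, hSγ]; ring
      · have hi : i = (⟨3, by omega⟩ : Fin n) := Fin.ext hj
        rw [hi, row3 hn vγ, hv0, hv3, hSγ]; ring
  -- conclude
  have hl1 : (GammaNTau n 0).lambda1 = γ := by
    unfold SignedGraph.lambda1
    have hg : ∀ (inst : DecidableEq (Fin n)),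
        IsGreatest (@spectrum ℝ (Matrix (Fin n) (Fin n) ℝ) Real.instCommSemiring
          (@Matrix.instRing (Fin n) ℝ (Fin.fintype n) inst Real.instRing) Matrix.instAlgebra
          (GammaNTau n 0).adjMatrix) γ := by
      intro inst
      constructor
      · rw [@mem_spec_iff n inst ((GammaNTau n 0).adjMatrix) γ]; exact hmem
      · intro z hz
        rw [@mem_spec_iff n inst ((GammaNTau n 0).adjMatrix) z] at hz
        exact hub z hz
    exact (hg (Classical.decEq (Fin n))).csSup_eq
  exact ⟨by rw [hl1]; exact hγgt, hl1⟩
end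

section
/- Let n ≥ 6. The signed graph Γ_{n,n−5} is switching isomorphic to Γ_{n,0}; in particular, Γ_{n,n−5} and Γ_{n,0} have the same adjacency spectrum. -/
open Polynomial in
private lemma sg_charpoly_conj {m : Type*} [Fintype m] [DecidableEq m] {R : Type*} [CommRing R]
    (A D : Matrix m m R) (hD : D * D = 1) : (D * A * D).charpoly = A.charpoly := by
  classical
  set Dc : Matrix m m R[X] := (C : R →+* R[X]).mapMatrix D with hDcdef
  have hDc : Dc * Dc = 1 := by
    rw [hDcdef, ← RingHom.map_mul, hD, RingHom.map_one]
  have hcomm : Dc * (Matrix.scalar m (X : R[X])) = (Matrix.scalar m (X : R[X])) * Dc :=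
    ((Matrix.scalar_commute (X : R[X]) (fun r => Commute.all _ r) Dc)).symm
  have hcm : Matrix.charmatrix (D * A * D) = Dc * Matrix.charmatrix A * Dc := by
    unfold Matrix.charmatrix
    rw [Matrix.mul_sub, Matrix.sub_mul, hcomm, Matrix.mul_assoc (Matrix.scalar m X) Dc Dc, hDc,
      Matrix.mul_one]
    congr 1
    rw [hDcdef, ← RingHom.map_mul, ← RingHom.map_mul]
  unfold Matrix.charpoly
  rw [hcm, Matrix.det_mul, Matrix.det_mul]
  have h1 : Dc.det * Dc.det = 1 := by rw [← Matrix.det_mul, hDc, Matrix.det_one]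
  linear_combination (Matrix.charmatrix A).det * h1

/-- The vertex permutation: swap `0 ↔ 2` and `3 ↔ n-1`. -/
private def sgFsw (n a : ℕ) : ℕ :=
  if a = 0 then 2 else if a = 2 then 0 else if a = 3 then n-1 else if a = n-1 then 3 else a

private lemma sgFsw_lt (n : ℕ) (hn : 6 ≤ n) (a : ℕ) (ha : a < n) : sgFsw n a < n := by
  unfold sgFsw; split_ifs <;> omega

private lemma sgFsw_invol (n : ℕ) (hn : 6 ≤ n) (a : ℕ) (ha : a < n) :
    sgFsw n (sgFsw n a) = a := by
  unfold sgFsw; split_ifs <;> (try exact ‹False›.elim) <;> omega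

open SignedGraph in
set_option maxHeartbeats 4000000 in
private lemma sg_key' (n : ℕ) (hn : 6 ≤ n) (a b : ℕ) (ha : a < n) (hb : b < n) (hab : a ≤ b) :
    gammaNTauAux 0 (min (sgFsw n a) (sgFsw n b)) (max (sgFsw n a) (sgFsw n b)) =
      (if a = 1 then (-1:ℤ) else 1) * gammaNTauAux (n-5) (min a b) (max a b)
        * (if b = 1 then (-1:ℤ) else 1) := by
  have hca : a = 0 ∨ a = 1 ∨ a = 2 ∨ a = 3 ∨ (4 ≤ a ∧ a ≤ n-2) ∨ a = n-1 := by omega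
  have hcb : b = 0 ∨ b = 1 ∨ b = 2 ∨ b = 3 ∨ (4 ≤ b ∧ b ≤ n-2) ∨ b = n-1 := by omega
  rcases hca with rfl|rfl|rfl|rfl|⟨ha4,ha2⟩|rfl
  · rcases hcb with rfl|rfl|rfl|rfl|⟨hb4,hb2⟩|rfl
    · rw [show sgFsw n (0) = (2) by unfold sgFsw; split_ifs <;> (try exact ‹False›.elim) <;> omega,
        show min (2) (2) = (2) by omega,
        show max (2) (2) = (2) by omega,
        show min (0) (0) = (0) by omega,
        show max (0) (0) = (0) by omega,
        if_neg (by omega : ¬(0:ℕ) = 1)]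
      simp only [gammaNTauAux, one_mul, mul_one, neg_mul, mul_neg, neg_neg,
        true_and, and_true, false_and, and_false, if_true, if_false]
      all_goals first
      | rfl
      | omega
    · rw [show sgFsw n (0) = (2) by unfold sgFsw; split_ifs <;> (try exact ‹False›.elim) <;> omega,
        show sgFsw n (1) = (1) by unfold sgFsw; split_ifs <;> (try exact ‹False›.elim) <;> omega,
        show min (2) (1) = (1) by omega,
        show max (2) (1) = (2) by omega,
        show min (0) (1) = (0) by omega,
        show max (0) (1) = (1) by omega,
        if_neg (by omega : ¬(0:ℕ) = 1),
        if_pos (rfl : (1:ℕ) = 1)]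
      simp only [gammaNTauAux, one_mul, mul_one, neg_mul, mul_neg, neg_neg,
        true_and, and_true, false_and, and_false, if_true, if_false]
      all_goals first
      | rfl
      | omega
    · rw [show sgFsw n (0) = (2) by unfold sgFsw; split_ifs <;> (try exact ‹False›.elim) <;> omega,
        show sgFsw n (2) = (0) by unfold sgFsw; split_ifs <;> (try exact ‹False›.elim) <;> omega,
        show min (2) (0) = (0) by omega,
        show max (2) (0) = (2) by omega,
        show min (0) (2) = (0) by omega,
        show max (0) (2) = (2) by omega,
        if_neg (by omega : ¬(0:ℕ) = 1),
        if_neg (by omega : ¬(2:ℕ) = 1)]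
      simp only [gammaNTauAux, one_mul, mul_one, neg_mul, mul_neg, neg_neg,
        true_and, and_true, false_and, and_false, if_true, if_false]
      all_goals first
      | rfl
      | omega
    · rw [show sgFsw n (0) = (2) by unfold sgFsw; split_ifs <;> (try exact ‹False›.elim) <;> omega,
        show sgFsw n (3) = (n-1) by unfold sgFsw; split_ifs <;> (try exact ‹False›.elim) <;> omega,
        show min (2) (n-1) = (2) by omega,
        show max (2) (n-1) = (n-1) by omega,
        show min (0) (3) = (0) by omega,
        show max (0) (3) = (3) by omega,
        if_neg (by omega : ¬(0:ℕ) = 1),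
        if_neg (by omega : ¬(3:ℕ) = 1)]
      simp only [gammaNTauAux, one_mul, mul_one, neg_mul, mul_neg, neg_neg,
        true_and, and_true, false_and, and_false, if_true, if_false]
      all_goals first
      | rfl
      | omega
    · rw [show sgFsw n (0) = (2) by unfold sgFsw; split_ifs <;> (try exact ‹False›.elim) <;> omega,
        show sgFsw n (b) = (b) by unfold sgFsw; split_ifs <;> (try exact ‹False›.elim) <;> omega,
        show min (2) (b) = (2) by omega,
        show max (2) (b) = (b) by omega,
        show min (0) (b) = (0) by omega,
        show max (0) (b) = (b) by omega,
        if_neg (by omega : ¬(0:ℕ) = 1),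
        if_neg (by omega : ¬(b:ℕ) = 1)]
      simp only [gammaNTauAux, one_mul, mul_one, neg_mul, mul_neg, neg_neg,
        true_and, and_true, false_and, and_false, if_true, if_false]
      all_goals first
      | rfl
      | omega
    · rw [show sgFsw n (0) = (2) by unfold sgFsw; split_ifs <;> (try exact ‹False›.elim) <;> omega,
        show sgFsw n (n-1) = (3) by unfold sgFsw; split_ifs <;> (try exact ‹False›.elim) <;> omega,
        show min (2) (3) = (2) by omega,
        show max (2) (3) = (3) by omega,
        show min (0) (n-1) = (0) by omega,
        show max (0) (n-1) = (n-1) by omega,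
        if_neg (by omega : ¬(0:ℕ) = 1),
        if_neg (by omega : ¬(n-1:ℕ) = 1)]
      simp only [gammaNTauAux, one_mul, mul_one, neg_mul, mul_neg, neg_neg,
        true_and, and_true, false_and, and_false, if_true, if_false]
      all_goals first
      | rfl
      | omega
  · rcases hcb with rfl|rfl|rfl|rfl|⟨hb4,hb2⟩|rfl
    · omega
    · rw [show sgFsw n (1) = (1) by unfold sgFsw; split_ifs <;> (try exact ‹False›.elim) <;> omega,
        show min (1) (1) = (1) by omega,
        show max (1) (1) = (1) by omega,
        if_pos (rfl : (1:ℕ) = 1)]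
      simp only [gammaNTauAux, one_mul, mul_one, neg_mul, mul_neg, neg_neg,
        true_and, and_true, false_and, and_false, if_true, if_false]
      all_goals first
      | rfl
      | omega
    · rw [show sgFsw n (1) = (1) by unfold sgFsw; split_ifs <;> (try exact ‹False›.elim) <;> omega,
        show sgFsw n (2) = (0) by unfold sgFsw; split_ifs <;> (try exact ‹False›.elim) <;> omega,
        show min (1) (0) = (0) by omega,
        show max (1) (0) = (1) by omega,
        show min (1) (2) = (1) by omega,
        show max (1) (2) = (2) by omega,
        if_pos (rfl : (1:ℕ) = 1),
        if_neg (by omega : ¬(2:ℕ) = 1)]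
      simp only [gammaNTauAux, one_mul, mul_one, neg_mul, mul_neg, neg_neg,
        true_and, and_true, false_and, and_false, if_true, if_false]
      all_goals first
      | rfl
      | omega
    · rw [show sgFsw n (1) = (1) by unfold sgFsw; split_ifs <;> (try exact ‹False›.elim) <;> omega,
        show sgFsw n (3) = (n-1) by unfold sgFsw; split_ifs <;> (try exact ‹False›.elim) <;> omega,
        show min (1) (n-1) = (1) by omega,
        show max (1) (n-1) = (n-1) by omega,
        show min (1) (3) = (1) by omega,
        show max (1) (3) = (3) by omega,
        if_pos (rfl : (1:ℕ) = 1),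
        if_neg (by omega : ¬(3:ℕ) = 1)]
      simp only [gammaNTauAux, one_mul, mul_one, neg_mul, mul_neg, neg_neg,
        true_and, and_true, false_and, and_false, if_true, if_false]
      all_goals first
      | rfl
      | omega
    · rw [show sgFsw n (1) = (1) by unfold sgFsw; split_ifs <;> (try exact ‹False›.elim) <;> omega,
        show sgFsw n (b) = (b) by unfold sgFsw; split_ifs <;> (try exact ‹False›.elim) <;> omega,
        show min (1) (b) = (1) by omega,
        show max (1) (b) = (b) by omega,
        if_pos (rfl : (1:ℕ) = 1),
        if_neg (by omega : ¬(b:ℕ) = 1)]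
      simp only [gammaNTauAux, one_mul, mul_one, neg_mul, mul_neg, neg_neg,
        true_and, and_true, false_and, and_false, if_true, if_false]
      all_goals first
      | rfl
      | omega
    · rw [show sgFsw n (1) = (1) by unfold sgFsw; split_ifs <;> (try exact ‹False›.elim) <;> omega,
        show sgFsw n (n-1) = (3) by unfold sgFsw; split_ifs <;> (try exact ‹False›.elim) <;> omega,
        show min (1) (3) = (1) by omega,
        show max (1) (3) = (3) by omega,
        show min (1) (n-1) = (1) by omega,
        show max (1) (n-1) = (n-1) by omega,
        if_pos (rfl : (1:ℕ) = 1),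
        if_neg (by omega : ¬(n-1:ℕ) = 1)]
      simp only [gammaNTauAux, one_mul, mul_one, neg_mul, mul_neg, neg_neg,
        true_and, and_true, false_and, and_false, if_true, if_false]
      all_goals first
      | rfl
      | omega
  · rcases hcb with rfl|rfl|rfl|rfl|⟨hb4,hb2⟩|rfl
    · omega
    · omega
    · rw [show sgFsw n (2) = (0) by unfold sgFsw; split_ifs <;> (try exact ‹False›.elim) <;> omega,
        show min (0) (0) = (0) by omega,
        show max (0) (0) = (0) by omega,
        show min (2) (2) = (2) by omega,
        show max (2) (2) = (2) by omega,
        if_neg (by omega : ¬(2:ℕ) = 1)]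
      simp only [gammaNTauAux, one_mul, mul_one, neg_mul, mul_neg, neg_neg,
        true_and, and_true, false_and, and_false, if_true, if_false]
      all_goals first
      | rfl
      | omega
    · rw [show sgFsw n (2) = (0) by unfold sgFsw; split_ifs <;> (try exact ‹False›.elim) <;> omega,
        show sgFsw n (3) = (n-1) by unfold sgFsw; split_ifs <;> (try exact ‹False›.elim) <;> omega,
        show min (0) (n-1) = (0) by omega,
        show max (0) (n-1) = (n-1) by omega,
        show min (2) (3) = (2) by omega,
        show max (2) (3) = (3) by omega,
        if_neg (by omega : ¬(2:ℕ) = 1),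
        if_neg (by omega : ¬(3:ℕ) = 1)]
      simp only [gammaNTauAux, one_mul, mul_one, neg_mul, mul_neg, neg_neg,
        true_and, and_true, false_and, and_false, if_true, if_false]
      all_goals first
      | rfl
      | omega
    · rw [show sgFsw n (2) = (0) by unfold sgFsw; split_ifs <;> (try exact ‹False›.elim) <;> omega,
        show sgFsw n (b) = (b) by unfold sgFsw; split_ifs <;> (try exact ‹False›.elim) <;> omega,
        show min (0) (b) = (0) by omega,
        show max (0) (b) = (b) by omega,
        show min (2) (b) = (2) by omega,
        show max (2) (b) = (b) by omega,
        if_neg (by omega : ¬(2:ℕ) = 1),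
        if_neg (by omega : ¬(b:ℕ) = 1)]
      simp only [gammaNTauAux, one_mul, mul_one, neg_mul, mul_neg, neg_neg,
        true_and, and_true, false_and, and_false, if_true, if_false]
      all_goals first
      | rfl
      | omega
    · rw [show sgFsw n (2) = (0) by unfold sgFsw; split_ifs <;> (try exact ‹False›.elim) <;> omega,
        show sgFsw n (n-1) = (3) by unfold sgFsw; split_ifs <;> (try exact ‹False›.elim) <;> omega,
        show min (0) (3) = (0) by omega,
        show max (0) (3) = (3) by omega,
        show min (2) (n-1) = (2) by omega,
        show max (2) (n-1) = (n-1) by omega,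
        if_neg (by omega : ¬(2:ℕ) = 1),
        if_neg (by omega : ¬(n-1:ℕ) = 1)]
      simp only [gammaNTauAux, one_mul, mul_one, neg_mul, mul_neg, neg_neg,
        true_and, and_true, false_and, and_false, if_true, if_false]
      all_goals first
      | rfl
      | omega
  · rcases hcb with rfl|rfl|rfl|rfl|⟨hb4,hb2⟩|rfl
    · omega
    · omega
    · omega
    · rw [show sgFsw n (3) = (n-1) by unfold sgFsw; split_ifs <;> (try exact ‹False›.elim) <;> omega,
        show min (n-1) (n-1) = (n-1) by omega,
        show max (n-1) (n-1) = (n-1) by omega,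
        show min (3) (3) = (3) by omega,
        show max (3) (3) = (3) by omega,
        if_neg (by omega : ¬(3:ℕ) = 1)]
      simp only [gammaNTauAux, one_mul, mul_one, neg_mul, mul_neg, neg_neg,
        true_and, and_true, false_and, and_false, if_true, if_false]
      all_goals first
      | rfl
      | omega
    · rw [show sgFsw n (3) = (n-1) by unfold sgFsw; split_ifs <;> (try exact ‹False›.elim) <;> omega,
        show sgFsw n (b) = (b) by unfold sgFsw; split_ifs <;> (try exact ‹False›.elim) <;> omega,
        show min (n-1) (b) = (b) by omega,
        show max (n-1) (b) = (n-1) by omega,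
        show min (3) (b) = (3) by omega,
        show max (3) (b) = (b) by omega,
        if_neg (by omega : ¬(3:ℕ) = 1),
        if_neg (by omega : ¬(b:ℕ) = 1)]
      simp only [gammaNTauAux, one_mul, mul_one, neg_mul, mul_neg, neg_neg,
        true_and, and_true, false_and, and_false, if_true, if_false]
      all_goals first
      | rfl
      | omega
    · rw [show sgFsw n (3) = (n-1) by unfold sgFsw; split_ifs <;> (try exact ‹False›.elim) <;> omega,
        show sgFsw n (n-1) = (3) by unfold sgFsw; split_ifs <;> (try exact ‹False›.elim) <;> omega,
        show min (n-1) (3) = (3) by omega,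
        show max (n-1) (3) = (n-1) by omega,
        show min (3) (n-1) = (3) by omega,
        show max (3) (n-1) = (n-1) by omega,
        if_neg (by omega : ¬(3:ℕ) = 1),
        if_neg (by omega : ¬(n-1:ℕ) = 1)]
      simp only [gammaNTauAux, one_mul, mul_one, neg_mul, mul_neg, neg_neg,
        true_and, and_true, false_and, and_false, if_true, if_false]
      all_goals first
      | rfl
      | omega
  · rcases hcb with rfl|rfl|rfl|rfl|⟨hb4,hb2⟩|rfl
    · omega
    · omega
    · omega
    · omega
    · rw [show sgFsw n (a) = (a) by unfold sgFsw; split_ifs <;> (try exact ‹False›.elim) <;> omega,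
        show sgFsw n (b) = (b) by unfold sgFsw; split_ifs <;> (try exact ‹False›.elim) <;> omega,
        show min (a) (b) = (a) by omega,
        show max (a) (b) = (b) by omega,
        if_neg (by omega : ¬(a:ℕ) = 1),
        if_neg (by omega : ¬(b:ℕ) = 1)]
      simp only [gammaNTauAux, one_mul, mul_one, neg_mul, mul_neg, neg_neg,
        true_and, and_true, false_and, and_false, if_true, if_false]
      all_goals first
      | rfl
      | omega
    · rw [show sgFsw n (a) = (a) by unfold sgFsw; split_ifs <;> (try exact ‹False›.elim) <;> omega,
        show sgFsw n (n-1) = (3) by unfold sgFsw; split_ifs <;> (try exact ‹False›.elim) <;> omega,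
        show min (a) (3) = (3) by omega,
        show max (a) (3) = (a) by omega,
        show min (a) (n-1) = (a) by omega,
        show max (a) (n-1) = (n-1) by omega,
        if_neg (by omega : ¬(a:ℕ) = 1),
        if_neg (by omega : ¬(n-1:ℕ) = 1)]
      simp only [gammaNTauAux, one_mul, mul_one, neg_mul, mul_neg, neg_neg,
        true_and, and_true, false_and, and_false, if_true, if_false]
      all_goals first
      | rfl
      | omega
  · rcases hcb with rfl|rfl|rfl|rfl|⟨hb4,hb2⟩|rfl
    · omega
    · omega
    · omega
    · omega
    · omega
    · rw [show sgFsw n (n-1) = (3) by unfold sgFsw; split_ifs <;> (try exact ‹False›.elim) <;> omega,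
        show min (3) (3) = (3) by omega,
        show max (3) (3) = (3) by omega,
        show min (n-1) (n-1) = (n-1) by omega,
        show max (n-1) (n-1) = (n-1) by omega,
        if_neg (by omega : ¬(n-1:ℕ) = 1)]
      simp only [gammaNTauAux, one_mul, mul_one, neg_mul, mul_neg, neg_neg,
        true_and, and_true, false_and, and_false, if_true, if_false]
      all_goals first
      | rfl
      | omega

open SignedGraph in
private lemma sg_key (n : ℕ) (hn : 6 ≤ n) (a b : ℕ) (ha : a < n) (hb : b < n) :
    gammaNTauAux 0 (min (sgFsw n a) (sgFsw n b)) (max (sgFsw n a) (sgFsw n b)) =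
      (if a = 1 then (-1:ℤ) else 1) * gammaNTauAux (n-5) (min a b) (max a b)
        * (if b = 1 then (-1:ℤ) else 1) := by
  rcases le_total a b with h | h
  · exact sg_key' n hn a b ha hb h
  · have H := sg_key' n hn b a hb ha h
    rw [min_comm (sgFsw n b), max_comm (sgFsw n b), min_comm b a, max_comm b a] at H
    linear_combination H

open SignedGraph in
/-- For `n ≥ 6`, `Γ_{n,n−5}` is switching isomorphic to `Γ_{n,0}`; in particular
they have the same adjacency spectrum (equal characteristic polynomials). -/
theorem GammaNTau_top_switching_isomorphic (n : ℕ) (hn : 6 ≤ n) :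
    (GammaNTau n (n - 5)).SwitchingIsomorphic (GammaNTau n 0) ∧
    ((GammaNTau n (n - 5)).adjMatrix).charpoly = ((GammaNTau n 0).adjMatrix).charpoly := by
  classical
  set Γ := GammaNTau n (n - 5) with hΓ
  set Γ' := GammaNTau n 0 with hΓ'
  let e : Fin n ≃ Fin n :=
    { toFun := fun i => ⟨sgFsw n i.1, sgFsw_lt n hn i.1 i.2⟩
      invFun := fun i => ⟨sgFsw n i.1, sgFsw_lt n hn i.1 i.2⟩
      left_inv := fun i => by
        apply Fin.ext; exact sgFsw_invol n hn i.1 i.2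
      right_inv := fun i => by
        apply Fin.ext; exact sgFsw_invol n hn i.1 i.2 }
  let s : Fin n → ℤ := fun v => if v.1 = 1 then -1 else 1
  have hs : ∀ v, s v = 1 ∨ s v = -1 := by
    intro v; by_cases h : v.1 = 1 <;> simp [s, h]
  have hsign : ∀ u v : Fin n, Γ'.sign (e u) (e v) = s u * Γ.sign u v * s v := by
    intro u v
    exact sg_key n hn u.1 v.1 u.2 v.2
  have hadj : ∀ u v : Fin n, Γ'.G.Adj (e u) (e v) ↔ Γ.G.Adj u v := by
    intro u v
    show Γ'.sign (e u) (e v) ≠ 0 ↔ Γ.sign u v ≠ 0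
    rw [hsign u v]
    rcases hs u with h1 | h1 <;> rcases hs v with h2 | h2 <;> rw [h1, h2] <;>
      simp
  refine ⟨⟨e, s, hs, hadj, hsign⟩, ?_⟩
  let d : Fin n → ℝ := fun v => ((s v : ℤ) : ℝ)
  let D : Matrix (Fin n) (Fin n) ℝ := Matrix.diagonal d
  have hDD : D * D = 1 := by
    ext i j
    simp only [D, Matrix.diagonal_mul_diagonal]
    rcases eq_or_ne i j with rfl | hij
    · rw [Matrix.diagonal_apply_eq, Matrix.one_apply_eq]
      by_cases h : i.1 = 1 <;> norm_num [d, s, h]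
    · rw [Matrix.diagonal_apply_ne _ hij, Matrix.one_apply_ne hij]
  have hsub : (Γ'.adjMatrix).submatrix ⇑e ⇑e = D * Γ.adjMatrix * D := by
    ext u v
    show ((Γ'.sign (e u) (e v) : ℤ) : ℝ) = (D * Γ.adjMatrix * D) u v
    rw [hsign u v]
    unfold D
    rw [Matrix.mul_diagonal, Matrix.diagonal_mul]
    show _ = d u * ((Γ.sign u v : ℤ) : ℝ) * d v
    unfold d
    push_cast
    ring
  have h1 : (Γ'.adjMatrix).submatrix ⇑e ⇑e = Matrix.reindex e.symm e.symm (Γ'.adjMatrix) := by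
    rw [Matrix.reindex_apply, Equiv.symm_symm]
  rw [← Matrix.charpoly_reindex (R := ℝ) e.symm (Γ'.adjMatrix), ← h1, hsub,
    sg_charpoly_conj _ _ hDD]
end

section
/- Let Γ be a signed graph of order n containing no negative cycle of length 3. Then the smallest eigenvalue of Γ satisfies λn(Γ) ≥ −n/2; equivalently, λ1(−Γ) ≤ n/2, where −Γ is obtained from Γ by reversing the signs of all edges. -/
private lemma ms_bound {V : Type*} [Fintype V] (R : V → V → Prop) [DecidableRel R]
    (htri : ∀ u v w, R u v → R v w → R u w → False)
    (z : V → ℝ) (hz : ∀ v, 0 ≤ z v) :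
    ∑ u, ∑ v, (if R u v then z u * z v else 0) ≤ (∑ v, z v) ^ 2 / 2 := by
  classical
  set S := ∑ v, z v with hS
  set W : V → ℝ := fun u => ∑ v ∈ Finset.univ.filter (fun v => R u v), z v with hW
  have hWsum : ∀ u, ∑ v, (if R u v then z u * z v else 0) = z u * W u := by
    intro u
    rw [hW, Finset.mul_sum, Finset.sum_filter]
  rcases isEmpty_or_nonempty V with hV | hV
  · have : S = 0 := by rw [hS]; simp
    simp [this]
  obtain ⟨u0, -, hmax⟩ := Finset.exists_max_image Finset.univ W
    ⟨Classical.arbitrary V, Finset.mem_univ _⟩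
  set I : Finset V := Finset.univ.filter (fun v => R u0 v) with hI
  set w := ∑ v ∈ I, z v with hw
  have hw0 : 0 ≤ w := Finset.sum_nonneg fun v _ => hz v
  have hIc : ∑ v ∈ Finset.univ \ I, z v = S - w := by
    rw [eq_sub_iff_add_eq, hw, Finset.sum_sdiff (Finset.subset_univ I)]
  have hWle : ∀ u, W u ≤ w := fun u => hmax u (Finset.mem_univ u)
  have hWI : ∀ u ∈ I, W u ≤ S - w := by
    intro u hu
    rw [← hIc]
    apply Finset.sum_le_sum_of_subset_of_nonneg
    · intro v hv
      simp only [hI, Finset.mem_filter, Finset.mem_univ, true_and] at hu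
      simp only [Finset.mem_filter, Finset.mem_univ, true_and] at hv
      rw [Finset.mem_sdiff]
      refine ⟨Finset.mem_univ v, fun hv' => ?_⟩
      simp only [hI, Finset.mem_filter, Finset.mem_univ, true_and] at hv'
      exact htri u0 u v hu hv hv'
    · intro v _ _; exact hz v
  have hSw : 0 ≤ S - w := by
    have h0 := Finset.sum_nonneg (s := Finset.univ \ I) fun v _ => hz v
    linarith [hIc]
  calc ∑ u, ∑ v, (if R u v then z u * z v else 0) = ∑ u, z u * W u :=
        Finset.sum_congr rfl fun u _ => hWsum u
    _ = ∑ u ∈ I, z u * W u + ∑ u ∈ Finset.univ \ I, z u * W u := by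
        rw [add_comm, Finset.sum_sdiff (Finset.subset_univ I)]
    _ ≤ ∑ u ∈ I, z u * (S - w) + ∑ u ∈ Finset.univ \ I, z u * w := by
        refine add_le_add (Finset.sum_le_sum fun u hu => ?_)
          (Finset.sum_le_sum fun u _ => ?_)
        · exact mul_le_mul_of_nonneg_left (hWI u hu) (hz u)
        · exact mul_le_mul_of_nonneg_left (hWle u) (hz u)
    _ = w * (S - w) + (S - w) * w := by
        rw [← Finset.sum_mul, ← Finset.sum_mul, hIc, ← hw]
    _ ≤ S ^ 2 / 2 := by nlinarith [sq_nonneg (S - 2 * w)]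

private lemma exists_eigvec {V : Type*} [Fintype V] [DecidableEq V] (M : Matrix V V ℝ) {μ : ℝ}
    (h : μ ∈ spectrum ℝ M) : ∃ x : V → ℝ, x ≠ 0 ∧ M.mulVec x = μ • x := by
  rw [spectrum.mem_iff, Matrix.isUnit_iff_isUnit_det] at h
  have hdet : (algebraMap ℝ (Matrix V V ℝ) μ - M).det = 0 := by
    by_contra h0; exact h (isUnit_iff_ne_zero.mpr h0)
  obtain ⟨x, hx0, hx⟩ := Matrix.exists_mulVec_eq_zero_iff.mpr hdet
  refine ⟨x, hx0, ?_⟩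
  have e : (algebraMap ℝ (Matrix V V ℝ) μ) = μ • (1 : Matrix V V ℝ) :=
    Algebra.algebraMap_eq_smul_one μ
  rw [e, Matrix.sub_mulVec, Matrix.smul_mulVec, Matrix.one_mulVec, sub_eq_zero] at hx
  exact hx.symm

private lemma quad_eq {V : Type*} [Fintype V] (M : Matrix V V ℝ) {x : V → ℝ} {μ : ℝ}
    (h : M.mulVec x = μ • x) :
    ∑ u, ∑ v, x u * M u v * x v = μ * ∑ v, x v ^ 2 := by
  have h1 : ∀ u, ∑ v, x u * M u v * x v = x u * M.mulVec x u := by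
    intro u
    rw [Matrix.mulVec, dotProduct, Finset.mul_sum]
    exact Finset.sum_congr rfl fun v _ => by ring
  rw [Finset.sum_congr rfl fun u _ => h1 u, h, Finset.mul_sum]
  exact Finset.sum_congr rfl fun v _ => by simp only [Pi.smul_apply, smul_eq_mul]; ring

private lemma adjMatrix_neg_eq {V : Type*} (Γ : SignedGraph V) :
    Γ.neg.adjMatrix = -Γ.adjMatrix := by
  funext u v
  simp [SignedGraph.adjMatrix, SignedGraph.neg]

private lemma neg_triangle_of {V : Type*} (Γ : SignedGraph V) {u v w : V}
    (huv : Γ.G.Adj u v) (hvw : Γ.G.Adj v w) (huw : Γ.G.Adj u w)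
    (hp : Γ.sign u v * Γ.sign v w * Γ.sign u w = -1) :
    Γ.HasNegCycleOfLength 3 := by
  have h1 : u ≠ v := huv.ne
  have h2 : v ≠ w := hvw.ne
  have h3 : u ≠ w := huw.ne
  refine ⟨u, .cons huv (.cons hvw (.cons huw.symm .nil)), ?_, ?_, rfl⟩
  · rw [SimpleGraph.Walk.isCycle_def]
    refine ⟨?_, by simp, ?_⟩
    · rw [SimpleGraph.Walk.isTrail_def]
      simp [SimpleGraph.Walk.edges, Sym2.eq_iff, h1, h2, h3, h1.symm, h2.symm, h3.symm]
    · simp [h1, h2, h3, h1.symm, h2.symm, h3.symm]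
  · show Γ.sign u v * (Γ.sign v w * (Γ.sign w u * 1)) = -1
    rw [Γ.sign_symm w u, mul_one, ← mul_assoc]
    exact hp

private lemma spec_neg_le {V : Type*} [Fintype V] [DecidableEq V] (Γ : SignedGraph V)
    (h3 : ¬ Γ.HasNegCycleOfLength 3) {μ : ℝ} (hμ : μ ∈ spectrum ℝ Γ.neg.adjMatrix) :
    μ ≤ (Fintype.card V : ℝ) / 2 := by
  classical
  set M := Γ.neg.adjMatrix with hM
  obtain ⟨x, hx0, hx⟩ := exists_eigvec M hμ
  set z : V → ℝ := fun v => |x v| with hz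
  set R : V → V → Prop := fun u v => Γ.G.Adj u v ∧ 0 < M u v * (x u * x v) with hR
  letI : DecidableRel R := fun a b => Classical.dec _
  have hMval : ∀ u v, M u v = -(Γ.sign u v : ℝ) := by
    intro u v
    simp [hM, SignedGraph.adjMatrix, SignedGraph.neg]
  have hMabs : ∀ u v, Γ.G.Adj u v → |M u v| = 1 := by
    intro u v h
    rw [hMval]
    rcases Γ.sign_mem u v h with h' | h' <;> simp [h']
  have hM0 : ∀ u v, ¬Γ.G.Adj u v → M u v = 0 := by
    intro u v h
    rw [hMval, Γ.sign_not u v h]; simp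
  have hterm : ∀ u v, x u * M u v * x v ≤ (if R u v then z u * z v else 0) := by
    intro u v
    by_cases hadj : Γ.G.Adj u v
    · by_cases hpos : 0 < M u v * (x u * x v)
      · rw [if_pos (show R u v from ⟨hadj, hpos⟩)]
        calc x u * M u v * x v = M u v * (x u * x v) := by ring
          _ ≤ |M u v * (x u * x v)| := le_abs_self _
          _ = |M u v| * (|x u| * |x v|) := by rw [abs_mul, abs_mul]
          _ = z u * z v := by rw [hMabs u v hadj, one_mul]
      · rw [if_neg (show ¬ R u v from fun h => hpos h.2)]
        have e : x u * M u v * x v = M u v * (x u * x v) := by ring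
        rw [e]
        exact le_of_not_gt hpos
    · rw [if_neg (show ¬ R u v from fun h => hadj h.1), hM0 u v hadj]
      simp
  have htri : ∀ u v w, R u v → R v w → R u w → False := by
    rintro u v w ⟨huv, p1⟩ ⟨hvw, p2⟩ ⟨huw, p3⟩
    have hprod : 0 < (M u v * (x u * x v)) * ((M v w * (x v * x w)) * (M u w * (x u * x w))) :=
      mul_pos p1 (mul_pos p2 p3)
    have hps : ((Γ.sign u v * Γ.sign v w * Γ.sign u w : ℤ) : ℝ) * (x u * x v * x w) ^ 2 < 0 := by
      have e : (M u v * (x u * x v)) * ((M v w * (x v * x w)) * (M u w * (x u * x w)))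
          = -(((Γ.sign u v * Γ.sign v w * Γ.sign u w : ℤ) : ℝ) * (x u * x v * x w) ^ 2) := by
        rw [hMval, hMval, hMval]; push_cast; ring
      rw [e] at hprod
      linarith
    have hint : Γ.sign u v * Γ.sign v w * Γ.sign u w = -1 := by
      rcases Γ.sign_mem u v huv with a | a <;> rcases Γ.sign_mem v w hvw with b | b <;>
        rcases Γ.sign_mem u w huw with c | c <;>
        simp only [a, b, c] at hps ⊢ <;>
        push_cast at hps <;> nlinarith [sq_nonneg (x u * x v * x w)]
    exact h3 (neg_triangle_of Γ huv hvw huw hint)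
  have hxs : 0 < ∑ v, x v ^ 2 := by
    have hex : ∃ v, x v ≠ 0 := by
      by_contra h; push_neg at h; exact hx0 (funext h)
    obtain ⟨v, hv⟩ := hex
    exact Finset.sum_pos' (fun i _ => sq_nonneg _) ⟨v, Finset.mem_univ v, by positivity⟩
  have hmain : μ * ∑ v, x v ^ 2 ≤ (∑ v, z v) ^ 2 / 2 := by
    rw [← quad_eq M hx]
    exact le_trans (Finset.sum_le_sum fun u _ => Finset.sum_le_sum fun v _ => hterm u v)
      (ms_bound R htri z fun v => abs_nonneg _)
  have hcs : (∑ v, z v) ^ 2 ≤ (Fintype.card V : ℝ) * ∑ v, x v ^ 2 := by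
    have := sq_sum_le_card_mul_sum_sq (s := (Finset.univ : Finset V)) (f := z)
    simpa [hz, sq_abs] using this
  have : μ * (∑ v, x v ^ 2) ≤ (Fintype.card V : ℝ) / 2 * (∑ v, x v ^ 2) := by linarith
  exact le_of_mul_le_mul_right this hxs

open SignedGraph in
/-- If a signed graph `Γ` of order `n` has no negative 3-cycle, then
`λₙ(Γ) ≥ −n/2`; equivalently `λ₁(−Γ) ≤ n/2`. -/
theorem lambdaMin_ge_of_no_neg_triangle {V : Type*} [Fintype V] (Γ : SignedGraph V)
    (h3 : ¬ Γ.HasNegCycleOfLength 3) :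
    -((Fintype.card V : ℝ) / 2) ≤ Γ.lambdaMin ∧
    Γ.neg.lambda1 ≤ (Fintype.card V : ℝ) / 2 := by
  letI := Classical.decEq V
  have key : ∀ μ ∈ spectrum ℝ Γ.neg.adjMatrix, μ ≤ (Fintype.card V : ℝ) / 2 :=
    fun μ hμ => spec_neg_le Γ h3 hμ
  constructor
  · show -((Fintype.card V : ℝ) / 2) ≤ sInf (spectrum ℝ Γ.adjMatrix)
    rcases (spectrum ℝ Γ.adjMatrix).eq_empty_or_nonempty with he | hne
    · rw [he, Real.sInf_empty]
      have : (0:ℝ) ≤ (Fintype.card V : ℝ) / 2 := by positivity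
      linarith
    · refine le_csInf hne fun μ hμ => ?_
      have hm : -μ ∈ spectrum ℝ Γ.neg.adjMatrix := by
        rw [adjMatrix_neg_eq, ← spectrum.neg_eq]
        exact Set.neg_mem_neg.mpr hμ
      linarith [key _ hm]
  · exact Real.sSup_le key (by positivity)
end

section
/- Let Γ be a signed graph of order n ≥ 4 and let x be a unit eigenvector of A(Γ) associated with the largest eigenvalue λ1(Γ). If x vanishes at three distinct vertices of Γ, then λ1(Γ) ≤ n − 4. -/
open SignedGraph in
/-- If a unit eigenvector for the largest eigenvalue of a signed graph of order
`n ≥ 4` vanishes at three distinct vertices, then `λ₁(Γ) ≤ n − 4`. -/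
theorem lambda1_le_of_three_zero_entries {V : Type*} [Fintype V] (Γ : SignedGraph V)
    (hn : 4 ≤ Fintype.card V) (x : V → ℝ)
    (heig : Γ.adjMatrix.mulVec x = Γ.lambda1 • x)
    (hunit : ∑ v : V, x v ^ 2 = 1)
    (a b c : V) (hab : a ≠ b) (hac : a ≠ c) (hbc : b ≠ c)
    (hxa : x a = 0) (hxb : x b = 0) (hxc : x c = 0) :
    Γ.lambda1 ≤ (Fintype.card V : ℝ) - 4 := by
  classical
  have hx0 : ∃ u, x u ≠ 0 := by
    by_contra h
    push_neg at h
    simp [h] at hunit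
  obtain ⟨v, -, hv⟩ := Finset.exists_max_image (Finset.univ) (fun v => |x v|)
    ⟨a, Finset.mem_univ a⟩
  obtain ⟨u0, hu0⟩ := hx0
  have hvpos : 0 < |x v| := lt_of_lt_of_le (abs_pos.mpr hu0) (hv u0 (Finset.mem_univ _))
  have hxv : x v ≠ 0 := abs_pos.mp hvpos
  have hva : v ≠ a := fun h => hxv (h ▸ hxa)
  have hvb : v ≠ b := fun h => hxv (h ▸ hxb)
  have hvc : v ≠ c := fun h => hxv (h ▸ hxc)
  have hsignabs : ∀ u w : V, |Γ.adjMatrix u w| ≤ 1 := by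
    intro u w
    by_cases h : Γ.G.Adj u w
    · rcases Γ.sign_mem u w h with h' | h' <;> simp [SignedGraph.adjMatrix, h']
    · simp [SignedGraph.adjMatrix, Γ.sign_not u w h]
  set T : Finset V := Finset.univ \ {a, b, c, v} with hT
  have hcard4 : ({a, b, c, v} : Finset V).card = 4 := by
    rw [Finset.card_insert_of_notMem (by simp [hab, hac, hva.symm]),
        Finset.card_insert_of_notMem (by simp [hbc, hvb.symm]),
        Finset.card_insert_of_notMem (by simp [hvc.symm]),
        Finset.card_singleton]
  have hcardT : (T.card : ℝ) = (Fintype.card V : ℝ) - 4 := by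
    rw [hT, Finset.card_sdiff_of_subset (Finset.subset_univ _), Finset.card_univ, hcard4]
    have : 4 ≤ Fintype.card V := hn
    push_cast [Nat.cast_sub this]
    ring
  have key : Γ.lambda1 * |x v| ≤ ((Fintype.card V : ℝ) - 4) * |x v| := by
    calc Γ.lambda1 * |x v| ≤ |Γ.lambda1| * |x v| :=
          mul_le_mul_of_nonneg_right (le_abs_self _) (abs_nonneg _)
      _ = |Γ.lambda1 * x v| := (abs_mul _ _).symm
      _ = |(Γ.adjMatrix.mulVec x) v| := by rw [heig]; simp
      _ = |∑ u, Γ.adjMatrix v u * x u| := by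
          simp [Matrix.mulVec, dotProduct]
      _ ≤ ∑ u, |Γ.adjMatrix v u * x u| := Finset.abs_sum_le_sum_abs _ _
      _ = ∑ u ∈ T, |Γ.adjMatrix v u * x u| := by
          refine (Finset.sum_subset (Finset.subset_univ T) ?_).symm
          intro u _ hu
          simp only [hT, Finset.mem_sdiff, Finset.mem_univ, true_and, not_not,
            Finset.mem_insert, Finset.mem_singleton] at hu
          rcases hu with rfl | rfl | rfl | rfl
          · simp [hxa]
          · simp [hxb]
          · simp [hxc]
          · simp [SignedGraph.adjMatrix, Γ.sign_not u u (Γ.G.irrefl (v := u))]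
      _ ≤ ∑ u ∈ T, |x v| := by
          refine Finset.sum_le_sum fun u _ => ?_
          rw [abs_mul]
          calc |Γ.adjMatrix v u| * |x u| ≤ 1 * |x v| :=
                mul_le_mul (hsignabs v u) (hv u (Finset.mem_univ u)) (abs_nonneg _)
                  zero_le_one
            _ = |x v| := one_mul _
      _ = (T.card : ℝ) * |x v| := by rw [Finset.sum_const, nsmul_eq_mul]
      _ = ((Fintype.card V : ℝ) - 4) * |x v| := by rw [hcardT]
  exact le_of_mul_le_mul_right key hvpos
end

section
/- Let n ≥ 7 and let Γ be a signed graph maximizing the spectral radius among all unbalanced signed graphs of order n that contain no negative cycle of length 3 and no negative cycle of length 4. Then ρ(Γ) = λ1(Γ), that is, the spectral radius of Γ is attained by its largest eigenvalue. -/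
universe u v

section HermAux

open Matrix in
theorem herm_spectrum_eq_range {V : Type*} [Fintype V] [DecidableEq V]
    {A : Matrix V V ℝ} (hA : A.IsHermitian) :
    spectrum ℝ A = Set.range hA.eigenvalues := by
  conv_lhs => rw [hA.spectral_theorem]
  rw [show (RCLike.ofReal ∘ hA.eigenvalues : V → ℝ) = hA.eigenvalues from rfl]
  rw [Unitary.conjStarAlgAut_apply, Unitary.spectrum_star_right_conjugate]
  exact spectrum_diagonal _

end HermAux
section HermAux2

open Matrix RealInnerProductSpace

variable {V : Type*} [Fintype V] [DecidableEq V] {A : Matrix V V ℝ}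

theorem herm_star_mulVec (x w : V → ℝ) (U : Matrix V V ℝ) :
    x ⬝ᵥ (U *ᵥ w) = (star U *ᵥ x) ⬝ᵥ w := by
  have h : star U = Uᵀ := by
    ext i j; simp [Matrix.star_apply]
  rw [h, Matrix.mulVec_transpose, dotProduct_mulVec]

theorem herm_quadform (hA : A.IsHermitian) (x : V → ℝ) :
    x ⬝ᵥ (A *ᵥ x) = ∑ i, hA.eigenvalues i *
      ((star (hA.eigenvectorUnitary : Matrix V V ℝ) *ᵥ x) i)^2 := by
  set U := (hA.eigenvectorUnitary : Matrix V V ℝ) with hU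
  set z := star U *ᵥ x with hz
  have h1 : A *ᵥ x = U *ᵥ (Matrix.diagonal hA.eigenvalues *ᵥ z) := by
    conv_lhs => rw [hA.spectral_theorem]
    rw [show (RCLike.ofReal ∘ hA.eigenvalues : V → ℝ) = hA.eigenvalues from rfl]
    rw [Unitary.conjStarAlgAut_apply, ← Matrix.mulVec_mulVec, ← Matrix.mulVec_mulVec]
  rw [h1, herm_star_mulVec, ← hz]
  simp only [dotProduct, Matrix.mulVec_diagonal]
  exact Finset.sum_congr rfl fun i _ => by ring

theorem herm_normsq (hA : A.IsHermitian) (x : V → ℝ) :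
    x ⬝ᵥ x = ∑ i, ((star (hA.eigenvectorUnitary : Matrix V V ℝ) *ᵥ x) i)^2 := by
  set U := (hA.eigenvectorUnitary : Matrix V V ℝ) with hU
  set z := star U *ᵥ x with hz
  have h2 : U * star U = 1 := Matrix.mem_unitaryGroup_iff.mp hA.eigenvectorUnitary.2
  have h1 : x ⬝ᵥ x = z ⬝ᵥ z := by
    conv_lhs => rw [show x ⬝ᵥ x = x ⬝ᵥ ((U * star U) *ᵥ x) by rw [h2, Matrix.one_mulVec]]
    rw [← Matrix.mulVec_mulVec, herm_star_mulVec]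
  rw [h1]
  simp only [dotProduct]
  exact Finset.sum_congr rfl fun i _ => by ring

theorem herm_quadform_le_sSup (hA : A.IsHermitian) [Nonempty V] (x : V → ℝ) :
    x ⬝ᵥ (A *ᵥ x) ≤ sSup (spectrum ℝ A) * (x ⬝ᵥ x) := by
  have hbdd : BddAbove (spectrum ℝ A) := by
    rw [herm_spectrum_eq_range hA]; exact (Set.finite_range _).bddAbove
  have hle : ∀ i, hA.eigenvalues i ≤ sSup (spectrum ℝ A) := fun i =>
    le_csSup hbdd (by rw [herm_spectrum_eq_range hA]; exact Set.mem_range_self i)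
  rw [herm_quadform hA x, herm_normsq hA x, Finset.mul_sum]
  exact Finset.sum_le_sum fun i _ =>
    mul_le_mul_of_nonneg_right (hle i) (sq_nonneg _)

theorem herm_exists_eigvec_sInf (hA : A.IsHermitian) [Nonempty V] :
    ∃ x : V → ℝ, x ⬝ᵥ x = 1 ∧ A *ᵥ x = sInf (spectrum ℝ A) • x := by
  suffices h : ∃ x : V → ℝ, x ⬝ᵥ x = 1 ∧ A *ᵥ x = sInf (Set.range hA.eigenvalues) • x by
    rwa [← herm_spectrum_eq_range hA] at h
  have hmem : sInf (spectrum ℝ A) ∈ spectrum ℝ A := by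
    have hfin : (spectrum ℝ A).Finite := by
      rw [herm_spectrum_eq_range hA]; exact Set.finite_range _
    have hne : (spectrum ℝ A).Nonempty := by
      rw [herm_spectrum_eq_range hA]; exact Set.range_nonempty _
    exact hne.csInf_mem hfin
  rw [herm_spectrum_eq_range hA] at hmem
  obtain ⟨i, hi⟩ := hmem
  refine ⟨⇑(hA.eigenvectorBasis i), ?_, ?_⟩
  · have h1 : ‖hA.eigenvectorBasis i‖ = 1 := hA.eigenvectorBasis.orthonormal.1 i
    have h2 : (inner ℝ (hA.eigenvectorBasis i) (hA.eigenvectorBasis i) : ℝ) = 1 := by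
      rw [real_inner_self_eq_norm_sq, h1]; norm_num
    rw [← h2, PiLp.inner_apply]
    simp [dotProduct, sq]
  · have h3 := hA.mulVec_eigenvectorBasis i
    rw [hi] at h3
    exact h3

end HermAux2
section Mantel

/-- Weighted Mantel-type bound for a triangle-free symmetric relation. -/
theorem weighted_mantel {V : Type*} [Fintype V] [Nonempty V]
    (R : V → V → Prop) [DecidableRel R]
    (hsym : ∀ u v, R u v → R v u)
    (htf : ∀ u v w, R u v → R v w → ¬ R u w)
    (p : V → ℝ) (hp : ∀ u, 0 ≤ p u) :
    ∑ u, ∑ v, (if R u v then p u * p v else 0) ≤ (∑ u, p u)^2 / 2 := by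
  classical
  set s : V → ℝ := fun u => ∑ v, (if R u v then p v else 0) with hs
  have hs_nonneg : ∀ u, 0 ≤ s u := fun u =>
    Finset.sum_nonneg fun v _ => by by_cases h : R u v <;> simp [h, hp v]
  set P : ℝ := ∑ u, p u with hP
  obtain ⟨w, -, hw⟩ := Finset.exists_max_image Finset.univ s Finset.univ_nonempty
  have hw' : ∀ u, s u ≤ s w := fun u => hw u (Finset.mem_univ u)
  -- the complement weight
  have hcomp : ∑ u, (if ¬ R w u then p u else 0) = P - s w := by
    rw [hP, hs, eq_sub_iff_add_eq, ← Finset.sum_add_distrib]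
    refine Finset.sum_congr rfl fun u _ => ?_
    by_cases h : R w u <;> simp [h]
  -- pointwise bound
  have hpt : ∀ u v, (if R u v then p u * p v else 0) ≤
      (if ¬ R w u then (if R u v then p u * p v else 0) else 0)
      + (if ¬ R w v then (if R u v then p u * p v else 0) else 0) := by
    intro u v
    by_cases h : R u v
    · have hnn : (0:ℝ) ≤ p u * p v := mul_nonneg (hp u) (hp v)
      by_cases h1 : R w u
      · by_cases h2 : R w v
        · exact absurd h (htf u w v (hsym w u h1) h2)
        · simp [h, h1, h2]
      · by_cases h2 : R w v <;> simp [h, h1, h2] <;> linarith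
    · simp [h]
  have hTle : ∑ u, ∑ v, (if R u v then p u * p v else 0) ≤ 2 * (s w * (P - s w)) := by
    calc ∑ u, ∑ v, (if R u v then p u * p v else 0)
        ≤ ∑ u, ∑ v, ((if ¬ R w u then (if R u v then p u * p v else 0) else 0)
          + (if ¬ R w v then (if R u v then p u * p v else 0) else 0)) := by
          refine Finset.sum_le_sum fun u _ => Finset.sum_le_sum fun v _ => hpt u v
      _ = (∑ u, ∑ v, (if ¬ R w u then (if R u v then p u * p v else 0) else 0))
          + (∑ u, ∑ v, (if ¬ R w v then (if R u v then p u * p v else 0) else 0)) := by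
          rw [← Finset.sum_add_distrib]
          exact Finset.sum_congr rfl fun u _ => Finset.sum_add_distrib
      _ ≤ s w * (P - s w) + s w * (P - s w) := by
          have e1 : ∑ u, ∑ v, (if ¬ R w u then (if R u v then p u * p v else 0) else 0)
              ≤ s w * (P - s w) := by
            have : ∀ u, ∑ v, (if ¬ R w u then (if R u v then p u * p v else 0) else 0)
                = (if ¬ R w u then p u * s u else 0) := by
              intro u
              by_cases h1 : R w u
              · simp [h1]
              · simp only [h1, not_false_iff, if_true]
                rw [hs, Finset.mul_sum]
                exact Finset.sum_congr rfl fun v _ => by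
                  by_cases h : R u v <;> simp [h, mul_comm, mul_assoc, mul_left_comm]
            rw [Finset.sum_congr rfl fun u _ => this u]
            calc ∑ u, (if ¬ R w u then p u * s u else 0)
                ≤ ∑ u, (if ¬ R w u then p u else 0) * s w := by
                  refine Finset.sum_le_sum fun u _ => ?_
                  by_cases h1 : R w u
                  · simp [h1]
                  · simp only [h1, not_false_iff, if_true]
                    exact mul_le_mul_of_nonneg_left (hw' u) (hp u)
              _ = (P - s w) * s w := by rw [← Finset.sum_mul, hcomp]
              _ = s w * (P - s w) := mul_comm _ _
          have e2 : ∑ u, ∑ v, (if ¬ R w v then (if R u v then p u * p v else 0) else 0)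
              ≤ s w * (P - s w) := by
            rw [Finset.sum_comm]
            have : ∀ v, ∑ u, (if ¬ R w v then (if R u v then p u * p v else 0) else 0)
                = (if ¬ R w v then p v * s v else 0) := by
              intro v
              by_cases h1 : R w v
              · simp [h1]
              · simp only [h1, not_false_iff, if_true]
                rw [hs, Finset.mul_sum]
                refine Finset.sum_congr rfl fun u _ => ?_
                by_cases h : R u v
                · have h' : R v u := hsym u v h
                  simp [h, h', mul_comm]
                · have h' : ¬ R v u := fun hc => h (hsym v u hc)
                  simp [h, h']
            rw [Finset.sum_congr rfl fun v _ => this v]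
            calc ∑ v, (if ¬ R w v then p v * s v else 0)
                ≤ ∑ v, (if ¬ R w v then p v else 0) * s w := by
                  refine Finset.sum_le_sum fun v _ => ?_
                  by_cases h1 : R w v
                  · simp [h1]
                  · simp only [h1, not_false_iff, if_true]
                    exact mul_le_mul_of_nonneg_left (hw' v) (hp v)
              _ = (P - s w) * s w := by rw [← Finset.sum_mul, hcomp]
              _ = s w * (P - s w) := mul_comm _ _
          linarith
      _ = 2 * (s w * (P - s w)) := by ring
  have hfinal : 2 * (s w * (P - s w)) ≤ P^2 / 2 := by nlinarith [sq_nonneg (P - 2 * s w)]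
  linarith

end Mantel
section Tri

namespace SignedGraph

theorem isCycle_triangle {V : Type*} {G : SimpleGraph V} {u v w : V}
    (huv : G.Adj u v) (hvw : G.Adj v w) (hwu : G.Adj w u) :
    (SimpleGraph.Walk.cons huv (SimpleGraph.Walk.cons hvw
      (SimpleGraph.Walk.cons hwu SimpleGraph.Walk.nil))).IsCycle := by
  have h1 : u ≠ v := huv.ne
  have h2 : v ≠ w := hvw.ne
  have h3 : w ≠ u := hwu.ne
  simp [SimpleGraph.Walk.isCycle_def, SimpleGraph.Walk.isTrail_def, h1, h2, h3,
    Sym2.eq, Sym2.rel_iff', h1.symm, h2.symm, h3.symm]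

theorem hasNegCycle3 {V : Type*} (Γ : SignedGraph V) {u v w : V}
    (huv : Γ.G.Adj u v) (hvw : Γ.G.Adj v w) (hwu : Γ.G.Adj w u)
    (hsign : Γ.sign u v * (Γ.sign v w * Γ.sign w u) = -1) :
    Γ.HasNegCycleOfLength 3 := by
  refine ⟨u, SimpleGraph.Walk.cons huv (SimpleGraph.Walk.cons hvw
      (SimpleGraph.Walk.cons hwu SimpleGraph.Walk.nil)), isCycle_triangle huv hvw hwu, ?_, rfl⟩
  show Γ.sign u v * (Γ.sign v w * (Γ.sign w u * 1)) = -1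
  rw [mul_one]; exact hsign

end SignedGraph

end Tri
section MuBound

open Matrix

theorem quadform_expand {V : Type*} [Fintype V] (M : Matrix V V ℝ) (x : V → ℝ) :
    x ⬝ᵥ (M *ᵥ x) = ∑ u, ∑ v, M u v * (x u * x v) := by
  simp only [dotProduct, Matrix.mulVec, Finset.mul_sum]
  exact Finset.sum_congr rfl fun u _ => Finset.sum_congr rfl fun v _ => by ring

theorem neg_sInf_le_half {V : Type*} [Fintype V] [DecidableEq V] [Nonempty V]
    (Γ : SignedGraph V) (h3 : ¬ Γ.HasNegCycleOfLength 3) :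
    - sInf (spectrum ℝ Γ.adjMatrix) ≤ (Fintype.card V : ℝ) / 2 := by
  classical
  set A := Γ.adjMatrix with hA_def
  have hA : A.IsHermitian := by
    ext i j
    simp [Matrix.conjTranspose_apply, hA_def, SignedGraph.adjMatrix, Γ.sign_symm i j]
  obtain ⟨x, hx1, hxe⟩ := herm_exists_eigvec_sInf hA
  set μ : ℝ := - sInf (spectrum ℝ A) with hmu
  have hquad : x ⬝ᵥ (A *ᵥ x) = sInf (spectrum ℝ A) := by
    rw [hxe, dotProduct_smul, smul_eq_mul, hx1, mul_one]
  -- the relation R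
  set R : V → V → Prop := fun u v => A u v * (x u * x v) < 0 with hR
  have hRdef : ∀ u v, R u v ↔ A u v * (x u * x v) < 0 := fun u v => Iff.rfl
  have hRsym : ∀ u v, R u v → R v u := by
    intro u v h
    rw [hRdef] at h ⊢
    have he : A v u * (x v * x u) = A u v * (x u * x v) := by
      rw [show A v u = A u v by simp [hA_def, SignedGraph.adjMatrix, Γ.sign_symm u v]]
      ring
    rw [he]; exact h
  have hadj : ∀ u v, R u v → Γ.G.Adj u v := by
    intro u v h
    by_contra hc
    have h0 : A u v = 0 := by simp [hA_def, SignedGraph.adjMatrix, Γ.sign_not u v hc]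
    rw [hRdef, h0, zero_mul] at h
    exact lt_irrefl 0 h
  have hRtf : ∀ u v w, R u v → R v w → ¬ R u w := by
    intro u v w h1 h2 h3'
    have auv := hadj u v h1
    have avw := hadj v w h2
    have auw := hadj u w h3'
    have hneg : A u v * (x u * x v) * (A v w * (x v * x w)) * (A u w * (x u * x w)) < 0 := by
      have p1 : (0:ℝ) < (- (A u v * (x u * x v))) * (- (A v w * (x v * x w)))
          * (- (A u w * (x u * x w))) := by
        apply mul_pos (mul_pos (by linarith) (by linarith)) (by linarith)
      nlinarith [p1]
    have hprod : (Γ.sign u v * Γ.sign v w * Γ.sign u w : ℝ) * (x u * x v * x w)^2 < 0 := by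
      have : A u v * (x u * x v) * (A v w * (x v * x w)) * (A u w * (x u * x w))
          = (Γ.sign u v * Γ.sign v w * Γ.sign u w : ℤ) * (x u * x v * x w)^2 := by
        push_cast
        simp only [hA_def, SignedGraph.adjMatrix]
        ring
      rw [this] at hneg
      push_cast at hneg ⊢
      exact hneg
    have hsneg : (Γ.sign u v * Γ.sign v w * Γ.sign u w : ℤ) < 0 := by
      by_contra hc
      push_neg at hc
      have : (0:ℝ) ≤ (Γ.sign u v * Γ.sign v w * Γ.sign u w : ℝ) := by exact_mod_cast hc
      nlinarith [sq_nonneg (x u * x v * x w)]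
    have hsval : (Γ.sign u v * Γ.sign v w * Γ.sign u w : ℤ) = -1 := by
      rcases Γ.sign_mem u v auv with h | h <;> rcases Γ.sign_mem v w avw with h' | h' <;>
        rcases Γ.sign_mem u w auw with h'' | h'' <;> rw [h, h', h''] at hsneg ⊢ <;> omega
    apply h3
    apply Γ.hasNegCycle3 auv avw auw.symm
    rw [Γ.sign_symm w u]
    rw [← mul_assoc]
    exact hsval
  -- bound each entry
  have habs : ∀ u v, |A u v| ≤ 1 := by
    intro u v
    by_cases h : Γ.G.Adj u v
    · rcases Γ.sign_mem u v h with h' | h' <;> simp [hA_def, SignedGraph.adjMatrix, h']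
    · simp [hA_def, SignedGraph.adjMatrix, Γ.sign_not u v h]
  -- μ ≤ S
  set y : V → ℝ := fun u => |x u| with hy
  set S : ℝ := ∑ u, ∑ v, (if R u v then y u * y v else 0) with hS
  have hmuS : μ ≤ S := by
    have hstep : ∑ u, ∑ v, (-(A u v * (x u * x v)))
        = - ∑ u, ∑ v, (A u v * (x u * x v)) := by
      simp [Finset.sum_neg_distrib]
    have hμ : μ = ∑ u, ∑ v, (-(A u v * (x u * x v))) := by
      rw [hstep, hmu, ← hquad, quadform_expand]
    rw [hμ, hS]
    refine Finset.sum_le_sum fun u _ => Finset.sum_le_sum fun v _ => ?_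
    by_cases h : R u v
    · simp only [h, if_true]
      have h' : A u v * (x u * x v) < 0 := h
      have : -(A u v * (x u * x v)) = |A u v * (x u * x v)| := by
        rw [abs_of_neg h']
      rw [this, abs_mul, abs_mul, hy]
      have := habs u v
      have h0 : (0:ℝ) ≤ |x u| * |x v| := mul_nonneg (abs_nonneg _) (abs_nonneg _)
      nlinarith [abs_nonneg (A u v)]
    · simp only [h, if_false]
      rw [hRdef] at h
      push_neg at h
      linarith
  -- Cauchy-Schwarz
  set n : ℝ := (Fintype.card V : ℝ) with hn
  have hN : ∑ u, ∑ v, (if R u v then (1:ℝ) else 0) ≤ n^2 / 2 := by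
    have := weighted_mantel R hRsym hRtf (fun _ => (1:ℝ)) (fun _ => zero_le_one)
    simpa [Finset.sum_const, hn] using this
  have hQ : ∑ u, ∑ v, (if R u v then (x u)^2 * (x v)^2 else 0) ≤ 1 / 2 := by
    have := weighted_mantel R hRsym hRtf (fun u => (x u)^2) (fun u => sq_nonneg _)
    have hsum : ∑ u, (x u)^2 = 1 := by
      rw [← hx1]; simp [dotProduct, sq]
    rw [hsum] at this
    simpa using this
  have hCS : S^2 ≤ (n^2/2) * (1/2) := by
    have key : S ^ 2 ≤ (∑ u, ∑ v, (if R u v then (1:ℝ) else 0))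
        * (∑ u, ∑ v, (if R u v then (x u)^2 * (x v)^2 else 0)) := by
      have e1 : S = ∑ p ∈ Finset.univ ×ˢ Finset.univ,
          (if R p.1 p.2 then (1:ℝ) else 0) * (if R p.1 p.2 then y p.1 * y p.2 else 0) := by
        rw [hS, Finset.sum_product]
        exact Finset.sum_congr rfl fun u _ => Finset.sum_congr rfl fun v _ => by
          by_cases h : R u v <;> simp [h]
      have e2 : ∑ u, ∑ v, (if R u v then (1:ℝ) else 0) = ∑ p ∈ Finset.univ ×ˢ Finset.univ,
          (if R p.1 p.2 then (1:ℝ) else 0)^2 := by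
        rw [Finset.sum_product]
        exact Finset.sum_congr rfl fun u _ => Finset.sum_congr rfl fun v _ => by
          by_cases h : R u v <;> simp [h]
      have e3 : ∑ u, ∑ v, (if R u v then (x u)^2 * (x v)^2 else 0)
          = ∑ p ∈ Finset.univ ×ˢ Finset.univ,
          (if R p.1 p.2 then y p.1 * y p.2 else 0)^2 := by
        rw [Finset.sum_product]
        refine Finset.sum_congr rfl fun u _ => Finset.sum_congr rfl fun v _ => ?_
        by_cases h : R u v <;> simp [h, hy, mul_pow, sq_abs]
      rw [e1, e2, e3]
      exact Finset.sum_mul_sq_le_sq_mul_sq _ _ _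
    calc S^2 ≤ _ := key
      _ ≤ (n^2/2) * (1/2) := by
        have hnn1 : 0 ≤ ∑ u, ∑ v, (if R u v then (x u)^2 * (x v)^2 else 0) :=
          Finset.sum_nonneg fun u _ => Finset.sum_nonneg fun v _ => by
            by_cases h : R u v <;> simp [h, mul_nonneg, sq_nonneg]
        have hnn2 : (0:ℝ) ≤ n^2/2 := by positivity
        exact mul_le_mul hN hQ hnn1 hnn2
  have hSnn : 0 ≤ S := by
    rw [hS]
    refine Finset.sum_nonneg fun u _ => Finset.sum_nonneg fun v _ => ?_
    by_cases h : R u v <;> simp [h, hy, mul_nonneg, abs_nonneg]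
  have hn0 : 0 ≤ n := by rw [hn]; positivity
  have : S ≤ n / 2 := by nlinarith
  linarith
end MuBound
section GN1
open SignedGraph

theorem gammaNAux_cases (a b : ℕ) :
    gammaNAux a b = 0
    ∨ (gammaNAux a b = 1 ∧ ((a = 0 ∧ b = 2) ∨ (a = 1 ∧ b = 3) ∨ (2 ≤ a ∧ a < b ∧ ¬(a = 2 ∧ b = 3))))
    ∨ (gammaNAux a b = -1 ∧ a = 0 ∧ b = 1) := by
  unfold gammaNAux
  split_ifs <;> simp_all <;> omega

theorem gammaN_tri (x y z : ℕ) :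
    gammaNAux (min x y) (max x y) * (gammaNAux (min y z) (max y z)
      * gammaNAux (min z x) (max z x)) ≠ -1 := by
  rcases gammaNAux_cases (min x y) (max x y) with h1 | ⟨h1, h1'⟩ | ⟨h1, h1'⟩ <;>
    rcases gammaNAux_cases (min y z) (max y z) with h2 | ⟨h2, h2'⟩ | ⟨h2, h2'⟩ <;>
      rcases gammaNAux_cases (min z x) (max z x) with h3 | ⟨h3, h3'⟩ | ⟨h3, h3'⟩ <;>
        rw [h1, h2, h3] <;> norm_num <;> omega

theorem gammaN_quad (x y z t : ℕ) :
    gammaNAux (min x y) (max x y) * (gammaNAux (min y z) (max y z)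
      * (gammaNAux (min z t) (max z t) * gammaNAux (min t x) (max t x))) ≠ -1 := by
  rcases gammaNAux_cases (min x y) (max x y) with h1 | ⟨h1, h1'⟩ | ⟨h1, h1'⟩ <;>
    rcases gammaNAux_cases (min y z) (max y z) with h2 | ⟨h2, h2'⟩ | ⟨h2, h2'⟩ <;>
      rcases gammaNAux_cases (min z t) (max z t) with h3 | ⟨h3, h3'⟩ | ⟨h3, h3'⟩ <;>
        rcases gammaNAux_cases (min t x) (max t x) with h4 | ⟨h4, h4'⟩ | ⟨h4, h4'⟩ <;>
          rw [h1, h2, h3, h4] <;> norm_num <;> omega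

end GN1
section GN2
open SignedGraph

@[simp] theorem walkSign_nil' {V : Type*} (Γ : SignedGraph V) {G' : SimpleGraph V} {u : V} :
    Γ.walkSign (SimpleGraph.Walk.nil : G'.Walk u u) = 1 := rfl

@[simp] theorem walkSign_cons' {V : Type*} (Γ : SignedGraph V) {G' : SimpleGraph V} {u v w : V}
    (h : G'.Adj u v) (p : G'.Walk v w) :
    Γ.walkSign (SimpleGraph.Walk.cons h p) = Γ.sign u v * Γ.walkSign p := rfl

theorem walk_len3_decomp {V : Type*} {G : SimpleGraph V} {u : V} (w : G.Walk u u)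
    (h : w.length = 3) :
    ∃ (a b : V) (h1 : G.Adj u a) (h2 : G.Adj a b) (h3 : G.Adj b u),
      w = SimpleGraph.Walk.cons h1 (SimpleGraph.Walk.cons h2 (SimpleGraph.Walk.cons h3
        SimpleGraph.Walk.nil)) := by
  cases w with
  | nil => simp at h
  | cons h1 p =>
    cases p with
    | nil => simp at h
    | cons h2 q =>
      cases q with
      | nil => simp at h
      | cons h3 r =>
        cases r with
        | nil => exact ⟨_, _, h1, h2, h3, rfl⟩
        | cons h4 s => simp [SimpleGraph.Walk.length_cons] at h

theorem walk_len4_decomp {V : Type*} {G : SimpleGraph V} {u : V} (w : G.Walk u u)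
    (h : w.length = 4) :
    ∃ (a b c : V) (h1 : G.Adj u a) (h2 : G.Adj a b) (h3 : G.Adj b c) (h4 : G.Adj c u),
      w = SimpleGraph.Walk.cons h1 (SimpleGraph.Walk.cons h2 (SimpleGraph.Walk.cons h3
        (SimpleGraph.Walk.cons h4 SimpleGraph.Walk.nil))) := by
  cases w with
  | nil => simp at h
  | cons h1 p =>
    cases p with
    | nil => simp at h
    | cons h2 q =>
      cases q with
      | nil => simp at h
      | cons h3 r =>
        cases r with
        | nil => simp at h
        | cons h4 s =>
          cases s with
          | nil => exact ⟨_, _, _, h1, h2, h3, h4, rfl⟩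
          | cons h5 t => simp [SimpleGraph.Walk.length_cons] at h

theorem gammaN_sign_eq (n : ℕ) (i j : Fin n) :
    (GammaN n).sign i j = gammaNAux (min i.val j.val) (max i.val j.val) := rfl

theorem gammaN_no_neg3 (n : ℕ) : ¬ (GammaN n).HasNegCycleOfLength 3 := by
  rintro ⟨u, w, hc, hneg, hlen⟩
  obtain ⟨a, b, h1, h2, h3, rfl⟩ := walk_len3_decomp w hlen
  apply gammaN_tri u.val a.val b.val
  simpa [gammaN_sign_eq] using hneg

theorem gammaN_no_neg4 (n : ℕ) : ¬ (GammaN n).HasNegCycleOfLength 4 := by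
  rintro ⟨u, w, hc, hneg, hlen⟩
  obtain ⟨a, b, c, h1, h2, h3, h4, rfl⟩ := walk_len4_decomp w hlen
  apply gammaN_quad u.val a.val b.val c.val
  simpa [gammaN_sign_eq] using hneg

end GN2
section GN3
open SignedGraph

theorem gammaN_has_neg5 (n : ℕ) (hn : 7 ≤ n) : (GammaN n).HasNegCycleOfLength 5 := by
  have h0 : (0:ℕ) < n := by omega
  have h1 : (1:ℕ) < n := by omega
  have h2 : (2:ℕ) < n := by omega
  have h3 : (3:ℕ) < n := by omega
  have h4 : (4:ℕ) < n := by omega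
  set v0 : Fin n := ⟨0, h0⟩
  set v1 : Fin n := ⟨1, h1⟩
  set v2 : Fin n := ⟨2, h2⟩
  set v3 : Fin n := ⟨3, h3⟩
  set v4 : Fin n := ⟨4, h4⟩
  have a01 : (GammaN n).G.Adj v0 v1 := by
    show gammaNAux (min 0 1) (max 0 1) ≠ 0; decide
  have a13 : (GammaN n).G.Adj v1 v3 := by
    show gammaNAux (min 1 3) (max 1 3) ≠ 0; decide
  have a34 : (GammaN n).G.Adj v3 v4 := by
    show gammaNAux (min 3 4) (max 3 4) ≠ 0; decide
  have a42 : (GammaN n).G.Adj v4 v2 := by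
    show gammaNAux (min 4 2) (max 4 2) ≠ 0; decide
  have a20 : (GammaN n).G.Adj v2 v0 := by
    show gammaNAux (min 2 0) (max 2 0) ≠ 0; decide
  refine ⟨v0, SimpleGraph.Walk.cons a01 (SimpleGraph.Walk.cons a13 (SimpleGraph.Walk.cons a34
    (SimpleGraph.Walk.cons a42 (SimpleGraph.Walk.cons a20 SimpleGraph.Walk.nil)))), ?_, ?_, rfl⟩
  · rw [SimpleGraph.Walk.isCycle_def, SimpleGraph.Walk.isTrail_def]
    refine ⟨?_, by simp, ?_⟩
    · simp only [SimpleGraph.Walk.edges_cons, SimpleGraph.Walk.edges_nil]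
      simp [List.nodup_cons, Sym2.eq, Sym2.rel_iff', Fin.ext_iff, v0, v1, v2, v3, v4]
    · simp only [SimpleGraph.Walk.support_cons, SimpleGraph.Walk.support_nil, List.tail_cons]
      simp [List.nodup_cons, Fin.ext_iff, v0, v1, v2, v3, v4]
  · simp [gammaN_sign_eq, v0, v1, v2, v3, v4]
    decide

theorem gammaN_unbalanced (n : ℕ) (hn : 7 ≤ n) : (GammaN n).Unbalanced := by
  intro hbal
  obtain ⟨u, w, hc, hneg, -⟩ := gammaN_has_neg5 n hn
  rw [hbal u w hc] at hneg
  exact absurd hneg (by decide)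

end GN3
section GN4
open SignedGraph Matrix

theorem gammaNAux_big {a b : ℕ} (ha : 2 ≤ a) (hb : 2 ≤ b) (hab : a ≠ b)
    (h23 : ¬((a = 2 ∧ b = 3) ∨ (a = 3 ∧ b = 2))) :
    gammaNAux (min a b) (max a b) = 1 := by
  unfold gammaNAux; split_ifs <;> omega

theorem gammaNAux_pair23 {a b : ℕ} (h : (a = 2 ∧ b = 3) ∨ (a = 3 ∧ b = 2)) :
    gammaNAux (min a b) (max a b) = 0 := by
  unfold gammaNAux; split_ifs <;> omega

theorem gammaNAux_diag' (a : ℕ) : gammaNAux (min a a) (max a a) = 0 := by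
  unfold gammaNAux; split_ifs <;> omega

theorem fin_ind_sum (n : ℕ) (hn : 7 ≤ n) :
    ∑ i : Fin n, (if 2 ≤ i.val then (1:ℝ) else 0) = (n:ℝ) - 2 := by
  have key : ∑ i : Fin n, (if 2 ≤ i.val then (1:ℝ) else 0)
      + ∑ i : Fin n, (if i.val < 2 then (1:ℝ) else 0) = n := by
    rw [← Finset.sum_add_distrib]
    have : ∀ i : Fin n, (if 2 ≤ i.val then (1:ℝ) else 0) + (if i.val < 2 then (1:ℝ) else 0)
        = 1 := by
      intro i; by_cases h : 2 ≤ i.val <;> simp [h] <;> omega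
    rw [Finset.sum_congr rfl fun i _ => this i]
    simp
  have hsmall : ∑ i : Fin n, (if i.val < 2 then (1:ℝ) else 0) = 2 := by
    have h0 : (0:ℕ) < n := by omega
    have h1 : (1:ℕ) < n := by omega
    have : ∀ i : Fin n, (if i.val < 2 then (1:ℝ) else 0)
        = (if i = ⟨0, h0⟩ then (1:ℝ) else 0) + (if i = ⟨1, h1⟩ then (1:ℝ) else 0) := by
      intro i
      by_cases ha : i = ⟨0, h0⟩ <;> by_cases hb : i = ⟨1, h1⟩ <;>
        simp_all [Fin.ext_iff] <;> omega
    rw [Finset.sum_congr rfl fun i _ => this i, Finset.sum_add_distrib]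
    norm_num
  linarith

theorem ind_val_sum_one (n : ℕ) (k : ℕ) (hk : k < n) :
    ∑ i : Fin n, (if i.val = k then (1:ℝ) else 0) = 1 := by
  have : ∀ i : Fin n, (if i.val = k then (1:ℝ) else 0)
      = (if i = ⟨k, hk⟩ then (1:ℝ) else 0) := by
    intro i
    by_cases h : i = ⟨k, hk⟩
    · subst h; simp
    · have : i.val ≠ k := fun hc => h (Fin.ext hc)
      simp [h, this]
  rw [Finset.sum_congr rfl fun i _ => this i, Finset.sum_ite_eq']
  simp

theorem gammaN_rayleigh (n : ℕ) (hn : 7 ≤ n) :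
    ((n:ℝ) - 3) - 2/((n:ℝ) - 2) ≤ sSup (spectrum ℝ (GammaN n).adjMatrix) := by
  classical
  set A := (GammaN n).adjMatrix with hA_def
  have hA : A.IsHermitian := by
    ext i j
    simp [Matrix.conjTranspose_apply, hA_def, SignedGraph.adjMatrix,
      (GammaN n).sign_symm i j]
  have hnonempty : Nonempty (Fin n) := ⟨⟨0, by omega⟩⟩
  set y : Fin n → ℝ := fun i => if 2 ≤ i.val then (1:ℝ) else 0 with hy
  -- pointwise value
  have hpt : ∀ i j : Fin n, A i j * (y i * y j)
      = (if 2 ≤ i.val then (1:ℝ) else 0) * (if 2 ≤ j.val then (1:ℝ) else 0)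
      - (if i = j then (if 2 ≤ i.val then (1:ℝ) else 0) else 0)
      - (if (i.val = 2 ∧ j.val = 3) ∨ (i.val = 3 ∧ j.val = 2) then (1:ℝ) else 0) := by
    intro i j
    have hAij : A i j = ((gammaNAux (min i.val j.val) (max i.val j.val) : ℤ) : ℝ) := rfl
    by_cases hi : 2 ≤ i.val
    · by_cases hj : 2 ≤ j.val
      · by_cases hij : i = j
        · subst hij
          have hp23 : ¬((i.val = 2 ∧ i.val = 3) ∨ (i.val = 3 ∧ i.val = 2)) := by omega
          rw [hAij, gammaNAux_diag' i.val]
          simp [hy, hi, hp23]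
        · by_cases h23 : (i.val = 2 ∧ j.val = 3) ∨ (i.val = 3 ∧ j.val = 2)
          · rw [hAij, gammaNAux_pair23 h23]
            simp [hy, hi, hj, hij, h23]
          · have hvne : i.val ≠ j.val := fun hc => hij (Fin.ext hc)
            rw [hAij, gammaNAux_big hi hj hvne h23]
            simp [hy, hi, hj, hij, h23]
      · have hp23 : ¬((i.val = 2 ∧ j.val = 3) ∨ (i.val = 3 ∧ j.val = 2)) := by omega
        have hij : i ≠ j := by
          intro hc; subst hc; exact hj hi
        simp [hy, hi, hj, hij, hp23]
    · have hp23 : ¬((i.val = 2 ∧ j.val = 3) ∨ (i.val = 3 ∧ j.val = 2)) := by omega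
      by_cases hij : i = j
      · subst hij; simp [hy, hi, hp23]
      · simp [hy, hi, hij, hp23]
  -- the 2-3 pair indicator sum
  have hS3 : ∀ i : Fin n, ∑ j : Fin n,
      (if (i.val = 2 ∧ j.val = 3) ∨ (i.val = 3 ∧ j.val = 2) then (1:ℝ) else 0)
      = (if i.val = 2 then (1:ℝ) else 0) + (if i.val = 3 then (1:ℝ) else 0) := by
    intro i
    have hpt3 : ∀ j : Fin n, (if (i.val = 2 ∧ j.val = 3) ∨ (i.val = 3 ∧ j.val = 2)
        then (1:ℝ) else 0)
        = (if i.val = 2 then (1:ℝ) else 0) * (if j.val = 3 then (1:ℝ) else 0)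
        + (if i.val = 3 then (1:ℝ) else 0) * (if j.val = 2 then (1:ℝ) else 0) := by
      intro j
      by_cases h1 : i.val = 2 <;> by_cases h2 : j.val = 3 <;>
        by_cases h3 : i.val = 3 <;> by_cases h4 : j.val = 2 <;>
          simp [h1, h2, h3, h4] <;> omega
    rw [Finset.sum_congr rfl fun j _ => hpt3 j, Finset.sum_add_distrib,
      ← Finset.mul_sum, ← Finset.mul_sum,
      ind_val_sum_one n 3 (by omega), ind_val_sum_one n 2 (by omega), mul_one, mul_one]
  -- total sum
  have hsum : y ⬝ᵥ (A *ᵥ y) = ((n:ℝ) - 2)^2 - ((n:ℝ) - 2) - 2 := by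
    rw [quadform_expand]
    rw [Finset.sum_congr rfl fun i _ => Finset.sum_congr rfl fun j _ => hpt i j]
    have e1 : ∀ i : Fin n, ∑ j : Fin n,
        ((if 2 ≤ i.val then (1:ℝ) else 0) * (if 2 ≤ j.val then (1:ℝ) else 0)
        - (if i = j then (if 2 ≤ i.val then (1:ℝ) else 0) else 0)
        - (if (i.val = 2 ∧ j.val = 3) ∨ (i.val = 3 ∧ j.val = 2) then (1:ℝ) else 0))
        = (if 2 ≤ i.val then (1:ℝ) else 0) * ((n:ℝ) - 2)
          - (if 2 ≤ i.val then (1:ℝ) else 0)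
          - ((if i.val = 2 then (1:ℝ) else 0) + (if i.val = 3 then (1:ℝ) else 0)) := by
      intro i
      rw [Finset.sum_sub_distrib, Finset.sum_sub_distrib, ← Finset.mul_sum,
        fin_ind_sum n hn, hS3 i]
      have es1 : ∑ j : Fin n, (if i = j then (if 2 ≤ i.val then (1:ℝ) else 0) else 0)
          = (if 2 ≤ i.val then (1:ℝ) else 0) := by
        rw [Finset.sum_ite_eq]; simp
      rw [es1]
    rw [Finset.sum_congr rfl fun i _ => e1 i]
    rw [Finset.sum_sub_distrib, Finset.sum_sub_distrib, ← Finset.sum_mul,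
      fin_ind_sum n hn, Finset.sum_add_distrib,
      ind_val_sum_one n 2 (by omega), ind_val_sum_one n 3 (by omega)]
    ring
  have hyy : y ⬝ᵥ y = (n:ℝ) - 2 := by
    have hptyy : ∀ i : Fin n, y i * y i = (if 2 ≤ i.val then (1:ℝ) else 0) := by
      intro i; by_cases h : 2 ≤ i.val <;> simp [hy, h]
    simp only [dotProduct]
    rw [Finset.sum_congr rfl fun i _ => hptyy i, fin_ind_sum n hn]
  have hray := herm_quadform_le_sSup hA y
  rw [hsum, hyy] at hray
  have hn2 : (0:ℝ) < (n:ℝ) - 2 := by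
    have : (7:ℝ) ≤ (n:ℝ) := by exact_mod_cast hn
    linarith
  have key : (((n:ℝ) - 3) - 2/((n:ℝ)-2)) * ((n:ℝ)-2)
      ≤ sSup (spectrum ℝ A) * ((n:ℝ)-2) := by
    have he : (((n:ℝ) - 3) - 2/((n:ℝ)-2)) * ((n:ℝ)-2)
        = ((n:ℝ)-2)^2 - ((n:ℝ)-2) - 2 := by
      field_simp
      ring
    rw [he]
    exact hray
  exact le_of_mul_le_mul_right key hn2

end GN4
section Pull
namespace SignedGraph

def pullback {V W : Type*} (Γ : SignedGraph V) (e : W ≃ V) : SignedGraph W where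
  G := Γ.G.comap e
  sign u v := Γ.sign (e u) (e v)
  sign_symm u v := Γ.sign_symm _ _
  sign_mem u v h := Γ.sign_mem _ _ h
  sign_not u v h := Γ.sign_not _ _ h

theorem walkSign_map {V W : Type*} (Γ1 : SignedGraph V) (Γ2 : SignedGraph W)
    (f : Γ1.G →g Γ2.G) (hsign : ∀ a b : V, Γ2.sign (f a) (f b) = Γ1.sign a b)
    {u v : V} (w : Γ1.G.Walk u v) : Γ2.walkSign (w.map f) = Γ1.walkSign w := by
  induction w with
  | nil => rfl
  | cons h p ih => rw [SimpleGraph.Walk.map_cons, walkSign_cons', walkSign_cons', hsign, ih]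

theorem hasNegCycle_map {V W : Type*} (Γ1 : SignedGraph V) (Γ2 : SignedGraph W)
    (f : Γ1.G →g Γ2.G) (hinj : Function.Injective f)
    (hsign : ∀ a b : V, Γ2.sign (f a) (f b) = Γ1.sign a b) (k : ℕ)
    (h : Γ1.HasNegCycleOfLength k) : Γ2.HasNegCycleOfLength k := by
  obtain ⟨u, w, hc, hneg, hlen⟩ := h
  exact ⟨f u, w.map f, (SimpleGraph.Walk.map_isCycle_iff_of_injective hinj).mpr hc,
    by rw [walkSign_map Γ1 Γ2 f hsign]; exact hneg,
    by rw [SimpleGraph.Walk.length_map]; exact hlen⟩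

def pullbackHom {V W : Type*} (Γ : SignedGraph V) (e : W ≃ V) :
    (Γ.pullback e).G →g Γ.G where
  toFun := e
  map_rel' := fun h => h

def pullbackInvHom {V W : Type*} (Γ : SignedGraph V) (e : W ≃ V) :
    Γ.G →g (Γ.pullback e).G where
  toFun := e.symm
  map_rel' := by
    intro a b h
    show Γ.G.Adj (e (e.symm a)) (e (e.symm b))
    simpa using h

theorem pullback_hasNegCycle {V W : Type*} (Γ : SignedGraph V) (e : W ≃ V) (k : ℕ)
    (h : (Γ.pullback e).HasNegCycleOfLength k) : Γ.HasNegCycleOfLength k :=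
  hasNegCycle_map _ _ (pullbackHom Γ e) (Equiv.injective e) (fun _ _ => rfl) k h

theorem pullback_hasNegCycle' {V W : Type*} (Γ : SignedGraph V) (e : W ≃ V) (k : ℕ)
    (h : Γ.HasNegCycleOfLength k) : (Γ.pullback e).HasNegCycleOfLength k := by
  refine hasNegCycle_map _ _ (pullbackInvHom Γ e) (Equiv.injective e.symm) ?_ k h
  intro a b
  show Γ.sign (e (e.symm a)) (e (e.symm b)) = Γ.sign a b
  simp

theorem pullback_unbalanced_of {V W : Type*} (Γ : SignedGraph V) (e : W ≃ V) (k : ℕ)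
    (h : Γ.HasNegCycleOfLength k) : (Γ.pullback e).Unbalanced := by
  intro hbal
  obtain ⟨u, w, hc, hneg, -⟩ := pullback_hasNegCycle' Γ e k h
  rw [hbal u w hc] at hneg
  exact absurd hneg (by decide)

theorem spectrum_pullback {V W : Type*} [Fintype V] [Fintype W] [DecidableEq V] [DecidableEq W]
    (Γ : SignedGraph V) (e : W ≃ V) :
    spectrum ℝ ((Γ.pullback e).adjMatrix) = spectrum ℝ Γ.adjMatrix := by
  have h : (Γ.pullback e).adjMatrix = (Matrix.reindexAlgEquiv ℝ ℝ e.symm) Γ.adjMatrix := rfl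
  rw [h, AlgEquiv.spectrum_eq]

end SignedGraph
end Pull
open SignedGraph in
/-- For `n ≥ 7`, if `Γ` maximizes the spectral radius among all unbalanced
signed graphs of order `n` with no negative 3-cycle and no negative 4-cycle, then
`ρ(Γ) = λ₁(Γ)`. -/
theorem rho_eq_lambda1_of_extremal {V : Type u} [Fintype V] (n : ℕ) (hn : 7 ≤ n)
    (hcard : Fintype.card V = n) (Γ : SignedGraph V) (hunb : Γ.Unbalanced)
    (h3 : ¬ Γ.HasNegCycleOfLength 3) (h4 : ¬ Γ.HasNegCycleOfLength 4)
    (hmax : ∀ (W : Type v) [Fintype W] (Δ : SignedGraph W), Fintype.card W = n →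
      Δ.Unbalanced → ¬ Δ.HasNegCycleOfLength 3 → ¬ Δ.HasNegCycleOfLength 4 →
      Δ.rho ≤ Γ.rho) :
    Γ.rho = Γ.lambda1 := by
  letI : DecidableEq V := Classical.decEq V
  letI : DecidableEq (ULift.{v} (Fin n)) := Classical.decEq _
  by_cases hcase : -Γ.lambdaMin ≤ Γ.lambda1
  · exact max_eq_left hcase
  · exfalso
    push_neg at hcase
    haveI hneV : Nonempty V := by
      refine Fintype.card_pos_iff.mp ?_
      omega
    -- upper bound
    have hmu : -Γ.lambdaMin ≤ (Fintype.card V : ℝ)/2 := neg_sInf_le_half Γ h3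
    have hrho_eq : Γ.rho = -Γ.lambdaMin := max_eq_right (le_of_lt hcase)
    -- the comparison graph
    set e : ULift.{v} (Fin n) ≃ Fin n := Equiv.ulift
    set Δ : SignedGraph (ULift.{v} (Fin n)) := (GammaN n).pullback e with hΔ
    have hcardW : Fintype.card (ULift.{v} (Fin n)) = n := by simp
    have hΔunb : Δ.Unbalanced := pullback_unbalanced_of _ e 5 (gammaN_has_neg5 n hn)
    have hΔ3 : ¬ Δ.HasNegCycleOfLength 3 := fun hc =>
      gammaN_no_neg3 n (pullback_hasNegCycle _ e 3 hc)
    have hΔ4 : ¬ Δ.HasNegCycleOfLength 4 := fun hc =>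
      gammaN_no_neg4 n (pullback_hasNegCycle _ e 4 hc)
    have hle := hmax _ Δ hcardW hΔunb hΔ3 hΔ4
    have hlow : ((n:ℝ) - 3) - 2/((n:ℝ)-2) ≤ Δ.lambda1 := by
      have h1 := gammaN_rayleigh n hn
      have h2 : spectrum ℝ (Δ.adjMatrix) = spectrum ℝ (GammaN n).adjMatrix :=
        spectrum_pullback _ e
      show ((n:ℝ) - 3) - 2/((n:ℝ)-2) ≤ sSup (spectrum ℝ Δ.adjMatrix)
      rw [h2]
      exact h1
    have hlam_le : Δ.lambda1 ≤ Δ.rho := le_max_left _ _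
    -- numeric contradiction
    have hcast : (7:ℝ) ≤ (n:ℝ) := by exact_mod_cast hn
    have hnV : (Fintype.card V : ℝ) = (n:ℝ) := by rw [hcard]
    have hpos : (0:ℝ) < (n:ℝ) - 2 := by linarith
    have hd : (2:ℝ)/((n:ℝ)-2) * ((n:ℝ)-2) = 2 := by field_simp
    have hchain : ((n:ℝ) - 3) - 2/((n:ℝ)-2) ≤ (n:ℝ)/2 := by
      calc ((n:ℝ) - 3) - 2/((n:ℝ)-2) ≤ Δ.lambda1 := hlow
        _ ≤ Δ.rho := hlam_le
        _ ≤ Γ.rho := hle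
        _ = -Γ.lambdaMin := hrho_eq
        _ ≤ (Fintype.card V : ℝ)/2 := hmu
        _ = (n:ℝ)/2 := by rw [hnV]
    nlinarith [hd, hpos, hcast, hchain, sq_nonneg ((n:ℝ) - 7)]
end

section
/- Let Γ be a signed graph of order n with balanced clique number ω_b(Γ) ≥ 1. Then λ1(Γ) ≤ n(1 − 1/ω_b(Γ)). -/
namespace SGProofAux

open Finset Matrix

variable {V : Type*} [Fintype V] [DecidableEq V]

/-- Motzkin–Straus type bound for symmetric 0/1 matrices with zero diagonal whose
"cliques" have size at most `ω`. -/
lemma motzkinStraus (B : Matrix V V ℝ) (hsymm : ∀ p q, B q p = B p q)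
    (hvals : ∀ p q, B p q = 0 ∨ B p q = 1) (hdiag : ∀ p, B p p = 0)
    (ω : ℕ) (hω : 1 ≤ ω)
    (hcl : ∀ S : Finset V, (∀ u ∈ S, ∀ v ∈ S, u ≠ v → B u v = 1) → S.card ≤ ω) :
    ∀ (N : ℕ) (y : V → ℝ), (∀ v, 0 ≤ y v) →
      (Finset.univ.filter fun v => y v ≠ 0).card ≤ N →
      y ⬝ᵥ (B *ᵥ y) ≤ (1 - 1/(ω:ℝ)) * (∑ v, y v)^2 := by
  have hωpos : (0:ℝ) < ω := by exact_mod_cast hω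
  have hBT : Bᵀ = B := by ext p q; simp [Matrix.transpose_apply, hsymm]
  intro N
  induction N with
  | zero =>
    intro y hy hcard
    have hzero : ∀ v, y v = 0 := by
      intro v
      by_contra h
      have hmem : v ∈ Finset.univ.filter fun v => y v ≠ 0 := by simp [h]
      have := Finset.card_pos.mpr ⟨v, hmem⟩
      omega
    have : y = 0 := funext hzero
    subst this
    simp
  | succ N ih =>
    intro y hy hcard
    set T := Finset.univ.filter fun v => y v ≠ 0 with hT
    have hexp : y ⬝ᵥ (B *ᵥ y) = ∑ p, ∑ q, y p * (B p q * y q) := by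
      simp [dotProduct, Matrix.mulVec, Finset.mul_sum]
    by_cases hclq : ∀ u ∈ T, ∀ v ∈ T, u ≠ v → B u v = 1
    · -- clique case
      have hcardT : T.card ≤ ω := hcl T hclq
      have hterm : ∀ p q : V, y p * (B p q * y q) ≤ (if p = q then 0 else y p * y q) := by
        intro p q
        rcases hvals p q with h | h
        · rw [h]
          by_cases hpq : p = q
          · simp [hpq]
          · simp only [if_neg hpq, mul_zero, zero_mul]
            exact mul_nonneg (hy p) (hy q)
        · have hpq : p ≠ q := by
            rintro rfl; rw [hdiag p] at h; norm_num at h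
          rw [h, if_neg hpq, one_mul]
      have hsum : y ⬝ᵥ (B *ᵥ y) ≤ ∑ p, ∑ q, (if p = q then (0:ℝ) else y p * y q) := by
        rw [hexp]
        exact Finset.sum_le_sum fun p _ => Finset.sum_le_sum fun q _ => hterm p q
      have hS2 : ∑ p, ∑ q, (if p = q then (0:ℝ) else y p * y q)
          = (∑ v, y v)^2 - ∑ v, y v ^ 2 := by
        have hrow : ∀ p : V, ∑ q, (if p = q then (0:ℝ) else y p * y q)
            = y p * (∑ q, y q) - y p ^ 2 := by
          intro p
          have hpt : ∀ q : V, (if p = q then (0:ℝ) else y p * y q)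
              = y p * y q - (if q = p then y p * y q else 0) := by
            intro q
            by_cases h : p = q
            · simp [h]
            · simp [h, Ne.symm h]
          rw [Finset.sum_congr rfl fun q _ => hpt q, Finset.sum_sub_distrib,
            Finset.sum_ite_eq' Finset.univ p (fun q => y p * y q), ← Finset.mul_sum]
          simp [pow_two]
        rw [Finset.sum_congr rfl fun p _ => hrow p, Finset.sum_sub_distrib, ← Finset.sum_mul]
        ring
      have h1 : (∑ v, y v) = ∑ v ∈ T, y v := by
        refine (Finset.sum_subset (Finset.subset_univ T) ?_).symm
        intro w _ hw
        by_contra h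
        exact hw (by simp [hT, h])
      have h2 : (∑ v, y v ^ 2) = ∑ v ∈ T, y v ^ 2 := by
        refine (Finset.sum_subset (Finset.subset_univ T) ?_).symm
        intro w _ hw
        have : y w = 0 := by by_contra h; exact hw (by simp [hT, h])
        simp [this]
      have hQ : 0 ≤ ∑ v ∈ T, y v ^ 2 := Finset.sum_nonneg fun i _ => sq_nonneg _
      have hCS : (∑ v ∈ T, y v)^2 ≤ (T.card : ℝ) * ∑ v ∈ T, y v ^ 2 := by
        exact sq_sum_le_card_mul_sum_sq
      have hcard_le : (T.card : ℝ) ≤ (ω : ℝ) := by exact_mod_cast hcardT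
      have hfinal : (1/(ω:ℝ)) * (∑ v, y v)^2 ≤ ∑ v, y v ^ 2 := by
        rw [h1, h2]
        rw [div_mul_eq_mul_div, one_mul, div_le_iff₀ hωpos]
        calc (∑ v ∈ T, y v)^2 ≤ (T.card : ℝ) * ∑ v ∈ T, y v ^ 2 := hCS
          _ ≤ (ω : ℝ) * ∑ v ∈ T, y v ^ 2 := mul_le_mul_of_nonneg_right hcard_le hQ
          _ = (∑ v ∈ T, y v ^ 2) * ω := mul_comm _ _
      have hring : (1 - 1/(ω:ℝ)) * (∑ v, y v)^2
          = (∑ v, y v)^2 - (1/(ω:ℝ)) * (∑ v, y v)^2 := by ring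
      rw [hS2] at hsum
      linarith
    · -- non-clique case: shift weight
      push_neg at hclq
      obtain ⟨u, hu, v, hv, huv, hBne⟩ := hclq
      have hB0 : B u v = 0 := (hvals u v).resolve_right hBne
      have key : ∀ u v : V, u ∈ T → v ∈ T → u ≠ v → B u v = 0 →
          (B *ᵥ y) v ≤ (B *ᵥ y) u →
          y ⬝ᵥ (B *ᵥ y) ≤ (1 - 1/(ω:ℝ)) * (∑ v, y v)^2 := by
        clear hB0 huv hu hv hBne u v
        intro u v hu hv huv hB0 hle
        have hyu : y u ≠ 0 := by simpa [hT] using hu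
        have hyv : y v ≠ 0 := by simpa [hT] using hv
        set c := y v with hc
        have hc0 : 0 < c := lt_of_le_of_ne (hy v) (Ne.symm hyv)
        set d : V → ℝ := Pi.single u c - Pi.single v c with hd
        set y' : V → ℝ := y + d with hy'
        have hy'v : y' v = 0 := by
          simp [hy', hd, Pi.single_apply, huv, Ne.symm huv, hc]
        have hy'u : y' u = y u + c := by
          simp [hy', hd, Pi.single_apply, huv, Ne.symm huv]
        have hy'w : ∀ w, w ≠ u → w ≠ v → y' w = y w := by
          intro w h1 h2
          simp [hy', hd, Pi.single_apply, h1, h2]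
        have hy'0 : ∀ w, 0 ≤ y' w := by
          intro w
          by_cases h1 : w = v
          · subst h1; rw [hy'v]
          by_cases h2 : w = u
          · subst h2; rw [hy'u]; have := hy w; linarith
          · rw [hy'w w h2 h1]; exact hy w
        have hy'sum : ∑ w, y' w = ∑ w, y w := by
          simp [hy', hd, Finset.sum_add_distrib, Finset.sum_sub_distrib,
            Finset.sum_pi_single]
        have hsupp : (Finset.univ.filter fun w => y' w ≠ 0) ⊆ T.erase v := by
          intro w hw
          simp only [Finset.mem_filter, Finset.mem_univ, true_and] at hw
          have hwv : w ≠ v := by rintro rfl; exact hw hy'v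
          refine Finset.mem_erase.mpr ⟨hwv, ?_⟩
          by_cases h2 : w = u
          · subst h2; exact hu
          · rw [hy'w w h2 hwv] at hw
            simp [hT, hw]
        have hcard' : (Finset.univ.filter fun w => y' w ≠ 0).card ≤ N := by
          have h1 := Finset.card_le_card hsupp
          have h2 := Finset.card_erase_of_mem hv
          have h3 : 1 ≤ T.card := Finset.card_pos.mpr ⟨v, hv⟩
          omega
        have hmono : y ⬝ᵥ (B *ᵥ y) ≤ y' ⬝ᵥ (B *ᵥ y') := by
          have hcomm : y ⬝ᵥ (B *ᵥ d) = d ⬝ᵥ (B *ᵥ y) := by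
            rw [Matrix.dotProduct_mulVec, ← Matrix.mulVec_transpose, hBT,
              dotProduct_comm]
          have hcross : d ⬝ᵥ (B *ᵥ y) = c * (B *ᵥ y) u - c * (B *ᵥ y) v := by
            simp [hd, sub_dotProduct, single_dotProduct]
          have hBvu : B v u = 0 := (hsymm u v).trans hB0
          have hdd : d ⬝ᵥ (B *ᵥ d) = 0 := by
            simp [hd, Matrix.mulVec_sub, Matrix.mulVec_single, sub_dotProduct,
              dotProduct_sub, single_dotProduct, hdiag u, hdiag v, hB0, hBvu]
          have hexp2 : y' ⬝ᵥ (B *ᵥ y')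
              = y ⬝ᵥ (B *ᵥ y) + (d ⬝ᵥ (B *ᵥ y) + (y ⬝ᵥ (B *ᵥ d) + d ⬝ᵥ (B *ᵥ d))) := by
            rw [hy', Matrix.mulVec_add, dotProduct_add, add_dotProduct,
              add_dotProduct]
            ring
          rw [hexp2, hcomm, hcross, hdd]
          have hstep : 0 ≤ c * (B *ᵥ y) u - c * (B *ᵥ y) v := by
            have := mul_le_mul_of_nonneg_left hle (le_of_lt hc0)
            linarith
          linarith
        calc y ⬝ᵥ (B *ᵥ y) ≤ y' ⬝ᵥ (B *ᵥ y') := hmono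
          _ ≤ (1 - 1/(ω:ℝ)) * (∑ w, y' w)^2 := ih y' hy'0 hcard'
          _ = (1 - 1/(ω:ℝ)) * (∑ w, y w)^2 := by rw [hy'sum]
      rcases le_total ((B *ᵥ y) v) ((B *ᵥ y) u) with h | h
      · exact key u v hu hv huv hB0 h
      · exact key v u hv hu (Ne.symm huv) ((hsymm u v).trans hB0) h

/-- walk sign for switching-trivial signs -/
lemma walkSign_eq (Γ : SignedGraph V) {G' : SimpleGraph V} (t : V → ℤ)
    (ht : ∀ v, t v * t v = 1)
    (h : ∀ a b, G'.Adj a b → Γ.sign a b = t a * t b) :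
    ∀ {u v : V} (w : G'.Walk u v), Γ.walkSign w = t u * t v := by
  intro u v w
  induction w with
  | nil => exact (ht _).symm
  | @cons a b v hadj p ih =>
    show Γ.sign a b * Γ.walkSign p = t a * t v
    rw [h a b hadj, ih]
    linear_combination t a * t v * ht b

end SGProofAux

open Matrix Finset

open SignedGraph in
/-- If `Γ` is a signed graph of order `n` with balanced clique number
`ω_b(Γ) = ω ≥ 1`, then `λ₁(Γ) ≤ n (1 − 1/ω)`. -/
theorem lambda1_le_balanced_clique_bound {V : Type*} [Fintype V] [DecidableEq V]
    (Γ : SignedGraph V) (ω : ℕ) (hω : 1 ≤ ω)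
    (hex : ∃ S : Finset V, S.card = ω ∧ Γ.IsBalancedClique S)
    (hmaxcl : ∀ S : Finset V, Γ.IsBalancedClique S → S.card ≤ ω) :
    Γ.lambda1 ≤ (Fintype.card V : ℝ) * (1 - 1 / (ω : ℝ)) := by
  classical
  have hωpos : (0:ℝ) < ω := by exact_mod_cast hω
  have hω1 : (1:ℝ)/ω ≤ 1 := by rw [div_le_one hωpos]; exact_mod_cast hω
  have hrhs : 0 ≤ (Fintype.card V : ℝ) * (1 - 1 / (ω : ℝ)) := by
    have hn : (0:ℝ) ≤ (Fintype.card V : ℝ) := Nat.cast_nonneg _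
    nlinarith
  unfold SignedGraph.lambda1
  rw [Subsingleton.elim (Classical.decEq V) ‹DecidableEq V›]
  refine Real.sSup_le ?_ hrhs
  intro μ hμ
  have hμ' : μ ∈ spectrum ℝ (Matrix.toLinAlgEquiv' Γ.adjMatrix) := by
    rwa [AlgEquiv.spectrum_eq]
  have hev : Module.End.HasEigenvalue (Matrix.toLinAlgEquiv' Γ.adjMatrix) μ :=
    Module.End.hasEigenvalue_iff_mem_spectrum.mpr hμ'
  obtain ⟨x, hx⟩ := hev.exists_hasEigenvector
  have hxe : Γ.adjMatrix *ᵥ x = μ • x := by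
    have h := hx.apply_eq_smul
    rwa [Matrix.toLinAlgEquiv'_apply] at h
  have hx0 : x ≠ 0 := hx.right
  obtain ⟨v₀, hv₀⟩ : ∃ v, x v ≠ 0 := by
    by_contra h; push_neg at h; exact hx0 (funext h)
  set A := Γ.adjMatrix with hA
  have hAuv : ∀ p q, A p q = ((Γ.sign p q : ℤ) : ℝ) := fun p q => rfl
  have hAvals : ∀ p q, A p q = 0 ∨ A p q = 1 ∨ A p q = -1 := by
    intro p q
    by_cases h : Γ.G.Adj p q
    · rcases Γ.sign_mem p q h with h' | h'
      · right; left; rw [hAuv, h']; norm_num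
      · right; right; rw [hAuv, h']; norm_num
    · left; rw [hAuv, Γ.sign_not p q h]; norm_num
  have hAdiag : ∀ p, A p p = 0 := fun p => by
    rw [hAuv, Γ.sign_not p p Γ.G.irrefl]; norm_num
  have hAsymm : ∀ p q, A q p = A p q := fun p q => by
    rw [hAuv, hAuv, Γ.sign_symm p q]
  set tz : V → ℤ := fun v => if x v < 0 then -1 else 1 with htz
  set t : V → ℝ := fun v => ((tz v : ℤ) : ℝ) with ht
  have htvals : ∀ v, t v = 1 ∨ t v = -1 := by
    intro v; by_cases h : x v < 0 <;> simp [ht, htz, h]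
  have ht2 : ∀ v, t v * t v = 1 := by
    intro v; rcases htvals v with h | h <;> rw [h] <;> norm_num
  have htz2 : ∀ v, tz v * tz v = 1 := by
    intro v; by_cases h : x v < 0 <;> simp [htz, h]
  set y : V → ℝ := fun v => t v * x v with hy
  have hy0 : ∀ v, 0 ≤ y v := by
    intro v
    by_cases h : x v < 0
    · simp only [hy, ht, htz, if_pos h]; push_cast; linarith
    · simp only [hy, ht, htz, if_neg h]; push_cast
      have := not_lt.mp h; linarith
  set B : Matrix V V ℝ := fun p q => if t p * A p q * t q = 1 then 1 else 0 with hB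
  have hBsymm : ∀ p q, B q p = B p q := by
    intro p q
    have h : t q * A q p * t p = t p * A p q * t q := by rw [hAsymm p q]; ring
    simp [hB, h]
  have hBvals : ∀ p q, B p q = 0 ∨ B p q = 1 := by
    intro p q; by_cases h : t p * A p q * t q = 1 <;> simp [hB, h]
  have hBdiag : ∀ p, B p p = 0 := by
    intro p
    have h : t p * A p p * t p = 0 := by rw [hAdiag]; ring
    simp [hB, h]
  have hcl : ∀ S : Finset V, (∀ u ∈ S, ∀ v ∈ S, u ≠ v → B u v = 1) → S.card ≤ ω := by
    intro S hS
    have hsign : ∀ u ∈ S, ∀ v ∈ S, u ≠ v → Γ.sign u v = tz u * tz v := by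
      intro u hu v hv huv
      have h1 : t u * A u v * t v = 1 := by
        have h := hS u hu v hv huv
        by_contra hcon; simp [hB, hcon] at h
      have h2 : A u v = t u * t v := by
        rcases htvals u with h | h <;> rcases htvals v with h' | h' <;>
          rw [h, h'] at h1 ⊢ <;> linarith
      have h3 : ((Γ.sign u v : ℤ) : ℝ) = ((tz u * tz v : ℤ) : ℝ) := by
        rw [← hAuv, h2, ht]
        push_cast
        ring
      exact_mod_cast h3
    have hbc : Γ.IsBalancedClique S := by
      constructor
      · intro u hu v hv huv
        by_contra hadj
        have h0 : Γ.sign u v = 0 := Γ.sign_not u v hadj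
        have h1 := hsign u hu v hv huv
        rw [h0] at h1
        have h2 := htz2 u; have h3 := htz2 v
        nlinarith
      · intro u w hw
        have hcond : ∀ a b : (S : Set V), (Γ.induce (S : Set V)).G.Adj a b →
            (Γ.induce (S : Set V)).sign a b = tz a.1 * tz b.1 := by
          intro a b hab
          have hadj : Γ.G.Adj a.1 b.1 := hab
          exact hsign a.1 (by exact_mod_cast a.2) b.1 (by exact_mod_cast b.2) hadj.ne
        rw [SGProofAux.walkSign_eq (Γ.induce (S : Set V)) (fun a => tz a.1)
          (fun a => htz2 a.1) hcond w]
        exact htz2 u.1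
    exact hmaxcl S hbc
  have hterm : ∀ p q, x p * (A p q * x q) ≤ y p * (B p q * y q) := by
    intro p q
    by_cases hc : t p * A p q * t q = 1
    · have hB1 : B p q = 1 := by simp [hB, hc]
      have h2 : A p q = t p * t q := by
        rcases htvals p with h | h <;> rcases htvals q with h' | h' <;>
          rw [h, h'] at hc ⊢ <;> linarith
      rw [hB1, h2]
      simp only [hy]
      exact le_of_eq (by ring)
    · have hB1 : B p q = 0 := by simp [hB, hc]
      rw [hB1]
      have hmem : t p * A p q * t q = 0 ∨ t p * A p q * t q = 1 ∨
          t p * A p q * t q = -1 := by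
        rcases hAvals p q with h | h | h <;> rcases htvals p with h1 | h1 <;>
          rcases htvals q with h2 | h2 <;> rw [h, h1, h2] <;> norm_num
      have hs : t p * A p q * t q ≤ 0 := by
        rcases hmem with h | h | h
        · rw [h]
        · exact absurd h hc
        · rw [h]; norm_num
      have heq : x p * (A p q * x q) = (y p * y q) * (t p * A p q * t q) := by
        simp only [hy]
        rcases htvals p with h1 | h1 <;> rcases htvals q with h2 | h2 <;>
          rw [h1, h2] <;> ring
      rw [heq]
      have hle0 : (y p * y q) * (t p * A p q * t q) ≤ 0 :=
        mul_nonpos_of_nonneg_of_nonpos (mul_nonneg (hy0 p) (hy0 q)) hs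
      simpa using hle0
  have hquad : μ * (∑ v, x v * x v) = x ⬝ᵥ (A *ᵥ x) := by
    rw [hxe, dotProduct_smul, smul_eq_mul, dotProduct]
  have hcomp : x ⬝ᵥ (A *ᵥ x) ≤ y ⬝ᵥ (B *ᵥ y) := by
    have e1 : x ⬝ᵥ (A *ᵥ x) = ∑ p, ∑ q, x p * (A p q * x q) := by
      simp [dotProduct, Matrix.mulVec, Finset.mul_sum]
    have e2 : y ⬝ᵥ (B *ᵥ y) = ∑ p, ∑ q, y p * (B p q * y q) := by
      simp [dotProduct, Matrix.mulVec, Finset.mul_sum]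
    rw [e1, e2]
    exact Finset.sum_le_sum fun p _ => Finset.sum_le_sum fun q _ => hterm p q
  have hms := SGProofAux.motzkinStraus B hBsymm hBvals hBdiag ω hω hcl (Fintype.card V) y hy0
    (le_of_le_of_eq (Finset.card_filter_le _ _) Finset.card_univ)
  have hCS : (∑ v, y v)^2 ≤ (Fintype.card V : ℝ) * ∑ v, y v ^ 2 := by
    have h := sq_sum_le_card_mul_sum_sq (s := (Finset.univ : Finset V)) (f := y)
    simpa [Finset.card_univ] using h
  have hyx : ∀ v, y v ^ 2 = x v * x v := by
    intro v
    simp only [hy]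
    rcases htvals v with h | h <;> rw [h] <;> ring
  set c := ∑ v, x v * x v with hcdef
  have hc0 : 0 < c := by
    refine Finset.sum_pos' (fun v _ => mul_self_nonneg _) ⟨v₀, Finset.mem_univ _, ?_⟩
    exact mul_self_pos.mpr hv₀
  have hfin : μ * c ≤ (Fintype.card V : ℝ) * (1 - 1/(ω:ℝ)) * c := by
    calc μ * c = x ⬝ᵥ (A *ᵥ x) := hquad
      _ ≤ y ⬝ᵥ (B *ᵥ y) := hcomp
      _ ≤ (1 - 1/(ω:ℝ)) * (∑ v, y v)^2 := hms
      _ ≤ (1 - 1/(ω:ℝ)) * ((Fintype.card V : ℝ) * ∑ v, y v ^ 2) := by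
          apply mul_le_mul_of_nonneg_left hCS
          linarith
      _ = (Fintype.card V : ℝ) * (1 - 1/(ω:ℝ)) * c := by
          rw [Finset.sum_congr rfl fun v _ => hyx v, ← hcdef]
          ring
  exact le_of_mul_le_mul_right hfin hc0
end

section
/- Let Γ be a signed graph of order n, let x = (x1,…,xn)ᵀ be an eigenvector of A(Γ) associated with the largest eigenvalue λ1(Γ), and let v_r, v_s be two non-adjacent vertices of Γ with x_r x_s ≥ 0 and with x_r and x_s not both zero. If Γ' is the signed graph obtained from Γ by adding a positive edge v_r v_s, then λ1(Γ') > λ1(Γ). -/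
open Matrix Finset

lemma rayleigh_aux {V : Type*} [Fintype V] [DecidableEq V] [Nonempty V]
    (A : Matrix V V ℝ) (hA : A.IsHermitian) (y : V → ℝ) :
    y ⬝ᵥ (A *ᵥ y) ≤ sSup (spectrum ℝ A) * (y ⬝ᵥ y) ∧
      (y ⬝ᵥ (A *ᵥ y) = sSup (spectrum ℝ A) * (y ⬝ᵥ y) →
        A *ᵥ y = sSup (spectrum ℝ A) • y) := by
  classical
  set L := sSup (spectrum ℝ A) with hL
  set B := hA.eigenvectorBasis with hB
  set μ := hA.eigenvalues with hμ
  have hLrange : spectrum ℝ A = Set.range μ := hA.spectrum_real_eq_range_eigenvalues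
  have hle : ∀ i, μ i ≤ L := by
    intro i
    apply le_csSup
    · rw [hLrange]; exact (Set.finite_range μ).bddAbove
    · rw [hLrange]; exact Set.mem_range_self i
  set y' : EuclideanSpace ℝ V := (WithLp.equiv 2 (V → ℝ)).symm y with hy'
  set c : V → ℝ := fun i => B.repr y' i with hc
  have F3 : y = ∑ i, c i • (⇑(B i) : V → ℝ) := by
    have h := congrArg WithLp.ofLp (B.sum_repr y')
    simp only [WithLp.ofLp_sum, WithLp.ofLp_smul] at h
    exact h.symm
  have F2 : ∀ i j, (⇑(B i) : V → ℝ) ⬝ᵥ (⇑(B j)) = if i = j then 1 else 0 := by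
    intro i j
    have h := orthonormal_iff_ite.mp B.orthonormal i j
    rw [EuclideanSpace.inner_eq_star_dotProduct, star_trivial, dotProduct_comm] at h
    exact h
  have F1 : ∀ i, A *ᵥ (⇑(B i) : V → ℝ) = μ i • ⇑(B i) := fun i =>
    hA.mulVec_eigenvectorBasis i
  have dpl : ∀ (f : V → V → ℝ) (w : V → ℝ),
      (∑ i, f i) ⬝ᵥ w = ∑ i, (f i) ⬝ᵥ w := by
    intro f w
    simp only [dotProduct, Finset.sum_apply, Finset.sum_mul]
    exact Finset.sum_comm
  have dpr : ∀ (w : V → ℝ) (f : V → V → ℝ),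
      w ⬝ᵥ (∑ i, f i) = ∑ i, w ⬝ᵥ (f i) := by
    intro w f
    simp only [dotProduct, Finset.sum_apply, Finset.mul_sum]
    exact Finset.sum_comm
  have hAy : A *ᵥ y = ∑ i, (c i * μ i) • (⇑(B i) : V → ℝ) := by
    have : A *ᵥ y = A.mulVecLin y := rfl
    rw [this, F3, map_sum]
    refine Finset.sum_congr rfl fun i _ => ?_
    rw [_root_.map_smul, Matrix.mulVecLin_apply, F1, smul_smul]
  have hdot : ∀ d : V → ℝ, (∑ i, (d i) • (⇑(B i) : V → ℝ)) ⬝ᵥ (∑ i, (c i) • (⇑(B i) : V → ℝ))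
      = ∑ i, d i * c i := by
    intro d
    rw [dpl]
    refine Finset.sum_congr rfl fun i _ => ?_
    rw [smul_dotProduct, dpr]
    simp only [dotProduct_smul, F2, smul_eq_mul, mul_ite, mul_one, mul_zero]
    rw [Finset.sum_ite_eq Finset.univ i (fun j => c j)]
    simp
  have hyy : y ⬝ᵥ y = ∑ i, c i * c i := by
    nth_rewrite 1 [F3]; nth_rewrite 1 [F3]
    exact hdot c
  have hyAy : y ⬝ᵥ (A *ᵥ y) = ∑ i, c i * μ i * c i := by
    have : (A *ᵥ y) ⬝ᵥ y = ∑ i, (c i * μ i) * c i := by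
      rw [hAy]; nth_rewrite 1 [F3]
      exact hdot _
    rwa [dotProduct_comm] at this
  have hterm : ∀ i, c i * μ i * c i ≤ L * (c i * c i) := by
    intro i
    have h1 : c i * μ i * c i = μ i * (c i * c i) := by ring
    rw [h1]
    exact mul_le_mul_of_nonneg_right (hle i) (mul_self_nonneg _)
  constructor
  · rw [hyAy, hyy, Finset.mul_sum]
    exact Finset.sum_le_sum fun i _ => hterm i
  · intro heq
    rw [hyAy, hyy, Finset.mul_sum] at heq
    have hall : ∀ i ∈ Finset.univ, c i * μ i * c i = L * (c i * c i) := by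
      by_contra hcon
      push_neg at hcon
      obtain ⟨i, _, hi⟩ := hcon
      have hstrict : c i * μ i * c i < L * (c i * c i) := lt_of_le_of_ne (hterm i) hi
      have := Finset.sum_lt_sum (fun j _ => hterm j) ⟨i, Finset.mem_univ i, hstrict⟩
      exact absurd heq (ne_of_lt this)
    have hcoef : ∀ i, c i * μ i = L * c i := by
      intro i
      have h := hall i (Finset.mem_univ i)
      rcases eq_or_ne (c i) 0 with h0 | h0
      · simp [h0]
      · exact mul_right_cancel₀ h0 (by linear_combination h)
    rw [hAy, F3, Finset.smul_sum]
    refine Finset.sum_congr rfl fun i _ => ?_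
    rw [smul_smul, hcoef i]


open SignedGraph in
/-- Adding a positive edge between two non-adjacent vertices `r, s` with
`x_r x_s ≥ 0` and `x_r, x_s` not both zero (where `x` is an eigenvector for `λ₁`) strictly
increases the largest eigenvalue. -/
theorem lambda1_lt_of_add_positive_edge {V : Type*} [Fintype V]
    (Γ Γ' : SignedGraph V) (r s : V) (hrs : r ≠ s) (hnadj : ¬ Γ.G.Adj r s)
    (x : V → ℝ) (hx0 : x ≠ 0) (heig : Γ.adjMatrix.mulVec x = Γ.lambda1 • x)
    (hprod : 0 ≤ x r * x s) (hnz : x r ≠ 0 ∨ x s ≠ 0)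
    (hpos : Γ'.sign r s = 1)
    (hrest : ∀ u v : V, ¬ ((u = r ∧ v = s) ∨ (u = s ∧ v = r)) → Γ'.sign u v = Γ.sign u v) :
    Γ.lambda1 < Γ'.lambda1 := by
  classical
  have hNE : Nonempty V := ⟨r⟩
  set A := Γ.adjMatrix with hAdef
  set A' := Γ'.adjMatrix with hA'def
  have hHerm' : A'.IsHermitian := by
    show A'ᴴ = A'
    ext i j
    simp only [Matrix.conjTranspose_apply, hA'def, SignedGraph.adjMatrix, star_trivial]
    rw [Γ'.sign_symm j i]
  have hlam1 : Γ.lambda1 = sSup (spectrum ℝ A) := rfl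
  have hlam' : Γ'.lambda1 = sSup (spectrum ℝ A') := rfl
  have e1 : A' r s = 1 := by simp [hA'def, SignedGraph.adjMatrix, hpos]
  have e2 : A' s r = 1 := by
    simp [hA'def, SignedGraph.adjMatrix, Γ'.sign_symm s r, hpos]
  have e3 : A r s = 0 := by simp [hAdef, SignedGraph.adjMatrix, Γ.sign_not r s hnadj]
  have e4 : A s r = 0 := by
    simp [hAdef, SignedGraph.adjMatrix, Γ.sign_not s r (fun h => hnadj h.symm)]
  have e5 : ∀ u v, ¬((u = r ∧ v = s) ∨ (u = s ∧ v = r)) → A' u v = A u v := by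
    intro u v h
    simp [hA'def, hAdef, SignedGraph.adjMatrix, hrest u v h]
  have hmv : ∀ u, (A' *ᵥ x) u = (A *ᵥ x) u
      + (if u = r then x s else if u = s then x r else 0) := by
    intro u
    have hdiff : (A' *ᵥ x) u - (A *ᵥ x) u = ∑ v, (A' u v - A u v) * x v := by
      simp [Matrix.mulVec, dotProduct, sub_mul, Finset.sum_sub_distrib]
    by_cases hur : u = r
    · subst hur
      have : ∑ v, (A' u v - A u v) * x v = x s := by
        rw [Finset.sum_eq_single s]
        · rw [e1, e3]; ring
        · intro v _ hv
          rw [e5 u v (by rintro (⟨_, h⟩ | ⟨h, _⟩); exact hv h; exact hrs h)]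
          ring
        · intro h; exact absurd (Finset.mem_univ s) h
      rw [this] at hdiff
      rw [if_pos rfl]; linarith
    · by_cases hus : u = s
      · subst hus
        have : ∑ v, (A' u v - A u v) * x v = x r := by
          rw [Finset.sum_eq_single r]
          · rw [e2, e4]; ring
          · intro v _ hv
            rw [e5 u v (by rintro (⟨h, _⟩ | ⟨_, h⟩); exact hrs h.symm; exact hv h)]
            ring
          · intro h; exact absurd (Finset.mem_univ r) h
        rw [this] at hdiff
        rw [if_neg hur, if_pos rfl]; linarith
      · have : ∑ v, (A' u v - A u v) * x v = 0 := by
          apply Finset.sum_eq_zero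
          intro v _
          rw [e5 u v (by rintro (⟨h, _⟩ | ⟨h, _⟩); exact hur h; exact hus h)]
          ring
        rw [this] at hdiff
        rw [if_neg hur, if_neg hus]; linarith
  have hRay : x ⬝ᵥ (A' *ᵥ x) = x ⬝ᵥ (A *ᵥ x) + 2 * (x r * x s) := by
    have : x ⬝ᵥ (A' *ᵥ x) = ∑ u, (x u * (A *ᵥ x) u
        + ((if u = r then x u * x s else 0) + (if u = s then x u * x r else 0))) := by
      unfold dotProduct
      refine Finset.sum_congr rfl fun u _ => ?_
      rw [hmv u]
      split_ifs with h1 h2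
      · exact absurd (h1 ▸ h2 : r = s) hrs  -- unreachable? handle
      · ring
      · ring
      · ring
    rw [this, Finset.sum_add_distrib, Finset.sum_add_distrib]
    simp only [Finset.sum_ite_eq' Finset.univ, Finset.mem_univ, if_pos]
    unfold dotProduct
    ring
  have hxAx : x ⬝ᵥ (A *ᵥ x) = Γ.lambda1 * (x ⬝ᵥ x) := by
    rw [heig, dotProduct_smul, smul_eq_mul]
  have hxx : 0 < x ⬝ᵥ x := by
    rcases lt_or_eq_of_le (Finset.sum_nonneg fun i _ => mul_self_nonneg (x i)) with h | h
    · exact h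
    · exact absurd (dotProduct_self_eq_zero.mp h.symm) hx0
  obtain ⟨hle', heqcase⟩ := rayleigh_aux A' hHerm' x
  rw [← hlam'] at hle' heqcase
  rcases hprod.lt_or_eq with hlt | heq0
  · have hcalc : Γ.lambda1 * (x ⬝ᵥ x) < Γ'.lambda1 * (x ⬝ᵥ x) := by
      have h1 : x ⬝ᵥ (A' *ᵥ x) = Γ.lambda1 * (x ⬝ᵥ x) + 2 * (x r * x s) := by
        rw [hRay, hxAx]
      nlinarith [hle']
    exact lt_of_mul_lt_mul_right hcalc (le_of_lt hxx)
  · have hA'x : x ⬝ᵥ (A' *ᵥ x) = Γ.lambda1 * (x ⬝ᵥ x) := by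
      rw [hRay, hxAx, ← heq0]; ring
    have hlamle : Γ.lambda1 ≤ Γ'.lambda1 := by
      have h := hle'
      rw [hA'x] at h
      exact le_of_mul_le_mul_right h hxx
    rcases lt_or_eq_of_le hlamle with h | h
    · exact h
    · exfalso
      have heigen' : A' *ᵥ x = Γ'.lambda1 • x := heqcase (by rw [hA'x, h])
      rcases hnz with hr | hs
      · have hs0 : x s = 0 := by
          rcases mul_eq_zero.mp heq0.symm with h' | h'
          · exact absurd h' hr
          · exact h'
        have h1 : (A' *ᵥ x) s = (A *ᵥ x) s + x r := by
          rw [hmv s, if_neg (Ne.symm hrs), if_pos rfl]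
        have h2 : (A' *ᵥ x) s = Γ'.lambda1 * x s := by
          rw [heigen']; simp
        have h3 : (A *ᵥ x) s = Γ.lambda1 * x s := by
          rw [heig]; simp
        rw [hs0, mul_zero] at h2 h3
        apply hr
        rw [h2, h3] at h1  -- h1 : 0 = 0 + x r? careful direction
        linarith
      · have hr0 : x r = 0 := by
          rcases mul_eq_zero.mp heq0.symm with h' | h'
          · exact h'
          · exact absurd h' hs
        have h1 : (A' *ᵥ x) r = (A *ᵥ x) r + x s := by
          rw [hmv r, if_pos rfl]
        have h2 : (A' *ᵥ x) r = Γ'.lambda1 * x r := by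
          rw [heigen']; simp
        have h3 : (A *ᵥ x) r = Γ.lambda1 * x r := by
          rw [heig]; simp
        rw [hr0, mul_zero] at h2 h3
        apply hs
        rw [h2, h3] at h1
        linarith
end

section
/- Every signed graph Γ is switching equivalent to a signed graph Γ' (with the same underlying graph) such that the largest eigenvalue λ1(Γ') of A(Γ') has an associated eigenvector all of whose entries are non-negative. -/
open Module End in
lemma matrix_mem_spectrum_iff_exists {V : Type*} [Fintype V] [DecidableEq V]
    (M : Matrix V V ℝ) (μ : ℝ) :
    μ ∈ spectrum ℝ M ↔ ∃ x : V → ℝ, x ≠ 0 ∧ M.mulVec x = μ • x := by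
  rw [← AlgEquiv.spectrum_eq (Matrix.toLinAlgEquiv' (R := ℝ) (n := V)) M,
      ← Module.End.hasEigenvalue_iff_mem_spectrum]
  constructor
  · intro h
    obtain ⟨x, hx⟩ := h.exists_hasEigenvector
    refine ⟨x, hx.2, ?_⟩
    have := hx.apply_eq_smul
    simpa [Matrix.toLinAlgEquiv'_apply, Matrix.toLin'_apply] using this
  · rintro ⟨x, hx0, hx⟩
    have : Module.End.HasEigenvector (Matrix.toLinAlgEquiv' M) μ x :=
      ⟨Module.End.mem_eigenspace_iff.mpr (by
        simpa [Matrix.toLinAlgEquiv'_apply, Matrix.toLin'_apply] using hx), hx0⟩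
    exact Module.End.hasEigenvalue_of_hasEigenvector this

lemma conj_spec_subset {V : Type*} [Fintype V] [DecidableEq V]
    {c : V → ℝ} (hc : ∀ v, c v * c v = 1) (M M' : Matrix V V ℝ)
    (hrel : ∀ u v, M' u v = c u * M u v * c v) :
    spectrum ℝ M ⊆ spectrum ℝ M' := by
  intro μ hμ
  rw [matrix_mem_spectrum_iff_exists] at hμ ⊢
  obtain ⟨x, hx0, hx⟩ := hμ
  refine ⟨fun v => c v * x v, ?_, ?_⟩
  · intro h
    apply hx0
    funext v
    have hv := congrFun h v
    simp only [Pi.zero_apply] at hv ⊢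
    have := congrArg (c v * ·) hv
    simpa [← mul_assoc, hc v] using this
  · funext u
    have hxu := congrFun hx u
    simp only [Matrix.mulVec, dotProduct, Pi.smul_apply, smul_eq_mul] at hxu ⊢
    calc ∑ v, M' u v * (c v * x v) = c u * ∑ v, M u v * x v := by
          rw [Finset.mul_sum]
          refine Finset.sum_congr rfl fun v _ => ?_
          rw [hrel u v]
          have := hc v
          rw [show c u * M u v * c v * (c v * x v) = c u * (M u v * x v) * (c v * c v) by ring,
              hc v, mul_one]
      _ = μ * (c u * x u) := by rw [hxu]; ring

open SignedGraph in
def switchGraph {V : Type*} (Γ : SignedGraph V) (s : V → ℤ) (hs : ∀ v, s v = 1 ∨ s v = -1) :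
    SignedGraph V where
  G := Γ.G
  sign := fun u v => s u * Γ.sign u v * s v
  sign_symm := fun u v => by
    show s u * Γ.sign u v * s v = s v * Γ.sign v u * s u
    rw [Γ.sign_symm u v]; ring
  sign_mem := fun u v h => by
    show s u * Γ.sign u v * s v = 1 ∨ s u * Γ.sign u v * s v = -1
    rcases hs u with h1 | h1 <;> rcases hs v with h2 | h2 <;>
      rcases Γ.sign_mem u v h with h3 | h3 <;> simp [h1, h2, h3]
  sign_not := fun u v h => by
    show s u * Γ.sign u v * s v = 0
    simp [Γ.sign_not u v h]

open SignedGraph in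
/-- Every signed graph is switching equivalent to a signed graph whose largest
eigenvalue admits an eigenvector with all entries non-negative. -/
theorem exists_switching_with_nonneg_eigenvector {V : Type*} [Fintype V] [Nonempty V]
    (Γ : SignedGraph V) :
    ∃ Γ' : SignedGraph V, Γ.SwitchingEquivalent Γ' ∧
      ∃ x : V → ℝ, x ≠ 0 ∧ Γ'.adjMatrix.mulVec x = Γ'.lambda1 • x ∧ ∀ v, 0 ≤ x v := by
  classical
  set A := Γ.adjMatrix with hAdef
  have hA : A.IsHermitian := by
    ext u v
    simp [hAdef, adjMatrix, Matrix.conjTranspose_apply, Γ.sign_symm u v]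
  have hfin : (spectrum ℝ A).Finite := A.finite_spectrum
  have hne : (spectrum ℝ A).Nonempty := by
    rw [hA.spectrum_real_eq_range_eigenvalues]
    exact Set.range_nonempty _
  have hl1 : Γ.lambda1 = sSup (spectrum ℝ A) := rfl
  have hmem : Γ.lambda1 ∈ spectrum ℝ A := hl1 ▸ hne.csSup_mem hfin
  obtain ⟨x, hx0, hx⟩ := (matrix_mem_spectrum_iff_exists A Γ.lambda1).mp hmem
  -- switching function
  set s : V → ℤ := fun v => if 0 ≤ x v then 1 else -1 with hsdef
  have hs : ∀ v, s v = 1 ∨ s v = -1 := fun v => by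
    by_cases h : 0 ≤ x v <;> simp [hsdef, h]
  have hs2 : ∀ v, s v * s v = 1 := fun v => by rcases hs v with h | h <;> rw [h] <;> ring
  refine ⟨switchGraph Γ s hs, ⟨rfl, s, hs, fun u v => rfl⟩, ?_⟩
  set Γ' : SignedGraph V := switchGraph Γ s hs with hΓ'
  set c : V → ℝ := fun v => (s v : ℝ) with hcdef
  have hc2 : ∀ v, c v * c v = 1 := fun v => by
    rcases hs v with h | h <;> simp [hcdef, h]
  have hrel : ∀ u v, Γ'.adjMatrix u v = c u * A u v * c v := fun u v => by
    show ((s u * Γ.sign u v * s v : ℤ) : ℝ) = c u * ((Γ.sign u v : ℤ) : ℝ) * c v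
    simp only [hcdef]; push_cast; ring
  have hrel' : ∀ u v, A u v = c u * Γ'.adjMatrix u v * c v := fun u v => by
    rw [hrel u v, show c u * (c u * A u v * c v) * c v = (c u * c u) * A u v * (c v * c v) by ring,
        hc2 u, hc2 v]; ring
  have hspec : spectrum ℝ Γ'.adjMatrix = spectrum ℝ A :=
    le_antisymm (conj_spec_subset hc2 _ _ hrel') (conj_spec_subset hc2 _ _ hrel)
  have hl1' : Γ'.lambda1 = Γ.lambda1 := by
    show sSup (spectrum ℝ Γ'.adjMatrix) = sSup (spectrum ℝ A)
    rw [hspec]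
  refine ⟨fun v => c v * x v, ?_, ?_, ?_⟩
  · intro h
    apply hx0
    funext v
    have hv := congrFun h v
    simp only [Pi.zero_apply] at hv ⊢
    have := congrArg (c v * ·) hv
    simpa [← mul_assoc, hc2 v] using this
  · funext u
    have hxu := congrFun hx u
    simp only [Matrix.mulVec, dotProduct, Pi.smul_apply, smul_eq_mul] at hxu ⊢
    rw [hl1']
    calc ∑ v, Γ'.adjMatrix u v * (c v * x v) = c u * ∑ v, A u v * x v := by
          rw [Finset.mul_sum]
          refine Finset.sum_congr rfl fun v _ => ?_
          rw [hrel u v,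
            show c u * A u v * c v * (c v * x v) = c u * (A u v * x v) * (c v * c v) by ring,
            hc2 v, mul_one]
      _ = Γ.lambda1 * (c u * x u) := by rw [hxu]; ring
  · intro v
    show 0 ≤ c v * x v
    by_cases h : 0 ≤ x v
    · have : c v = 1 := by simp [hcdef, hsdef, h]
      rw [this, one_mul]; exact h
    · have : c v = -1 := by simp [hcdef, hsdef, h]
      rw [this]; nlinarith [not_le.mp h]
end
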